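/- arXiv:2602.11822 — 6 statements merged into one kernel-verified Lean document; each statement's English description precedes it below -/
import Mathlib

section
/- (Theorem 1: positive spectrum of the directed grounded Laplacian.) Suppose Assumption 1 holds with partition V1 ∪ V2 of {1,…,N}. Let δ_1,…,δ_N ≥ 0 and let B_1,…,B_N ∈ ℝ^{d×d} be symmetric, each positive semidefinite or negative semidefinite, such that |B_i| is positive definite for every i ∈ V1. For i ∈ V1 set C_i = (1/2) λ_max[ |B_i|⁻¹ ( Σ_{j∈N'_i}|A_{ji}| − Σ_{j∈N_i}|A_{ij}| ) ] (all eigenvalues of this matrix are real, since it is similar via |B_i|^{1/2} to a symmetric matrix). If δ_i > C_i for every i ∈ V1, then every eigenvalue of the grounded Laplacian L_B = L + blockdiag(δ_1|B_1|,…,δ_N|B_N|), taken over ℂ, has strictly positive real part. -/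
open Matrix Filter
open scoped Classical

/-- `|Q|` for a real symmetric matrix that is positive semidefinite or negative
semidefinite: it equals `Q` in the first case and `-Q` in the second. -/
noncomputable def absM {d : ℕ} (Q : Matrix (Fin d) (Fin d) ℝ) : Matrix (Fin d) (Fin d) ℝ :=
  if Q.PosSemidef then Q else -Q

/-- A signed matrix-weight assignment: for `i ≠ j`, each weight `A i j` is symmetric
and either positive semidefinite or negative semidefinite. -/
def SignedWeights {N d : ℕ} (A : Fin N → Fin N → Matrix (Fin d) (Fin d) ℝ) : Prop :=
  ∀ i j : Fin N, i ≠ j → (A i j).IsSymm ∧ ((A i j).PosSemidef ∨ (-(A i j)).PosSemidef)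

/-- The signed matrix-weighted Laplacian: `(i,j)` block `−A_{ij}` for `j ≠ i`, and
`(i,i)` block `Σ_{k≠i}|A_{ik}|`. -/
noncomputable def Lap {N d : ℕ} (A : Fin N → Fin N → Matrix (Fin d) (Fin d) ℝ) :
    Matrix (Fin N × Fin d) (Fin N × Fin d) ℝ :=
  fun p q =>
    if p.1 = q.1 then (∑ k ∈ Finset.univ.erase p.1, absM (A p.1 k)) p.2 q.2
    else (-(A p.1 q.1)) p.2 q.2

/-- The block-diagonal `Nd × Nd` matrix with `d × d` diagonal blocks `D 1, …, D N`. -/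
def blockDiag' {N d : ℕ} (D : Fin N → Matrix (Fin d) (Fin d) ℝ) :
    Matrix (Fin N × Fin d) (Fin N × Fin d) ℝ :=
  fun p q => if p.1 = q.1 then D p.1 p.2 q.2 else 0

/-- Matrix-weighted in-degree `Σ_{k∈N_i}|A_{ik}|` of vertex `i`
(weights `A i k = 0` contribute nothing). -/
noncomputable def inDeg {N d : ℕ} (A : Fin N → Fin N → Matrix (Fin d) (Fin d) ℝ)
    (i : Fin N) : Matrix (Fin d) (Fin d) ℝ :=
  ∑ k ∈ Finset.univ.erase i, absM (A i k)

/-- Matrix-weighted out-degree `Σ_{k∈N'_i}|A_{ki}|` of vertex `i`. -/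
noncomputable def outDeg {N d : ℕ} (A : Fin N → Fin N → Matrix (Fin d) (Fin d) ℝ)
    (i : Fin N) : Matrix (Fin d) (Fin d) ℝ :=
  ∑ k ∈ Finset.univ.erase i, absM (A k i)

/-- A positive–negative path from `i` to `j`: a sequence `i = p 0, …, p m = j` with
`m ≥ 1` in which every traversed weight `A_{p(s+1), p(s)}` is positive or negative
definite. -/
def PNPath {N d : ℕ} (A : Fin N → Fin N → Matrix (Fin d) (Fin d) ℝ) (i j : Fin N) : Prop :=
  ∃ m : ℕ, 0 < m ∧ ∃ p : Fin (m + 1) → Fin N, p 0 = i ∧ p (Fin.last m) = j ∧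
    ∀ s : Fin m, (A (p s.succ) (p s.castSucc)).PosDef ∨ (-(A (p s.succ) (p s.castSucc))).PosDef

/-- Vertex `j` is in-degree-dominated. -/
def InDegDom {N d : ℕ} (A : Fin N → Fin N → Matrix (Fin d) (Fin d) ℝ) (j : Fin N) : Prop :=
  (inDeg A j - outDeg A j).PosSemidef

/-- Assumption 1: `{1,…,N} = V1 ∪ V2` disjointly, every `j ∈ V2` is reached from some
`i ∈ V1` by a positive–negative path, and every `j ∈ V2` is in-degree-dominated. -/
def Assumption1 {N d : ℕ} (A : Fin N → Fin N → Matrix (Fin d) (Fin d) ℝ)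
    (V1 V2 : Finset (Fin N)) : Prop :=
  V1 ∪ V2 = Finset.univ ∧ V1 ∩ V2 = ∅ ∧
    (∀ j ∈ V2, ∃ i ∈ V1, PNPath A i j) ∧ (∀ j ∈ V2, InDegDom A j)

/-- `Ω_i`: the set of (other) vertices `j` with `A_{ij}` negative semidefinite and nonzero. -/
noncomputable def OmegaSet {N d : ℕ} (A : Fin N → Fin N → Matrix (Fin d) (Fin d) ℝ)
    (i : Fin N) : Finset (Fin N) :=
  (Finset.univ.erase i).filter fun j => (-(A i j)).PosSemidef ∧ A i j ≠ 0


section CharpolyAux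
variable {n : Type*} [Fintype n] [DecidableEq n]

lemma my_eval_charpoly {K : Type*} [CommRing K] (M : Matrix n n K) (μ : K) :
    M.charpoly.eval μ = (Matrix.scalar n μ - M).det := by
  rw [Matrix.charpoly, ← Polynomial.coe_evalRingHom, RingHom.map_det]
  congr 1
  ext i j
  by_cases h : i = j <;>
    simp [h, Matrix.charmatrix_apply, Matrix.scalar_apply, Matrix.diagonal_apply,
      Matrix.sub_apply]

lemma my_isRoot_charpoly_iff {K : Type*} [Field K] (M : Matrix n n K) (μ : K) :
    M.charpoly.IsRoot μ ↔ ∃ v : n → K, v ≠ 0 ∧ M *ᵥ v = μ • v := by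
  rw [Polynomial.IsRoot, my_eval_charpoly, ← Matrix.exists_mulVec_eq_zero_iff]
  constructor
  · rintro ⟨v, hv, h⟩
    refine ⟨v, hv, ?_⟩
    have : (Matrix.scalar n μ) *ᵥ v - M *ᵥ v = 0 := by rwa [← Matrix.sub_mulVec]
    have h2 : (Matrix.scalar n μ) *ᵥ v = μ • v := by
      funext p; simp [Matrix.mulVec_diagonal, Algebra.algebraMap_eq_smul_one, mul_comm]
    rw [h2] at this
    exact (sub_eq_zero.mp this).symm
  · rintro ⟨v, hv, h⟩
    refine ⟨v, hv, ?_⟩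
    rw [Matrix.sub_mulVec]
    have h2 : (Matrix.scalar n μ) *ᵥ v = μ • v := by
      funext p; simp [Matrix.mulVec_diagonal, Algebra.algebraMap_eq_smul_one, mul_comm]
    rw [h2, h, sub_self]
end CharpolyAux


section PDAux
variable {n : Type*} [Fintype n] [DecidableEq n]

lemma my_posDef_of_eigenvalues_pos {M : Matrix n n ℝ} (hM : M.IsHermitian)
    (h : ∀ i, 0 < hM.eigenvalues i) : M.PosDef := by
  have hpsd : M.PosSemidef := hM.posSemidef_iff_eigenvalues_nonneg.mpr fun i => (h i).le
  have hdet : M.det ≠ 0 := by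
    rw [hM.det_eq_prod_eigenvalues]
    exact ne_of_gt (Finset.prod_pos fun i _ => h i)
  refine Matrix.PosDef.of_dotProduct_mulVec_pos hM fun x hx => ?_
  rcases (hpsd.dotProduct_mulVec_nonneg x).lt_or_eq with hlt | heq
  · exact hlt
  · exfalso
    have h0 : M *ᵥ x = 0 := (hpsd.dotProduct_mulVec_zero_iff x).mp heq.symm
    have : x = 0 := by
      have hinj : Function.Injective (M.mulVec) :=
        Matrix.mulVec_injective_iff_isUnit.mpr ((Matrix.isUnit_iff_isUnit_det M).mpr hdet.isUnit)
      have := hinj (a₁ := x) (a₂ := 0) (by simpa using h0)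
      simpa using this
    exact hx this

lemma my_eigen_isRoot {K : Type*} [Field K] {M : Matrix n n K} {μ : K} {v : n → K}
    (hv : v ≠ 0) (h : M *ᵥ v = μ • v) : M.charpoly.IsRoot μ := by
  rw [my_isRoot_charpoly_iff]; exact ⟨v, hv, h⟩

open scoped MatrixOrder in
/-- The key spectral lemma: if every real root of `charpoly (P⁻¹ * D)` is `< 2δ`,
with `P` positive definite and `D` hermitian, then `(2δ)•P - D` is positive definite. -/
lemma deltaP_pd {P D : Matrix n n ℝ} (hP : P.PosDef) (hD : D.IsHermitian) (δ : ℝ)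
    (hr : ∀ μ : ℝ, (P⁻¹ * D).charpoly.IsRoot μ → μ / 2 < δ) :
    ((2 * δ) • P - D).PosDef := by
  set R := CFC.sqrt P with hRdef
  have hRpsd : R.PosSemidef := Matrix.nonneg_iff_posSemidef.mp (CFC.sqrt_nonneg P)
  have hRherm : R.IsHermitian := hRpsd.1
  have hRR : R * R = P := CFC.sqrt_mul_sqrt_self P hP.posSemidef.nonneg
  have hdetP : P.det ≠ 0 := hP.det_pos.ne'
  have hdetR : R.det ≠ 0 := by
    intro h0
    apply hdetP
    rw [← hRR, Matrix.det_mul, h0, mul_zero]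
  have hRunit : IsUnit R := (Matrix.isUnit_iff_isUnit_det R).mpr hdetR.isUnit
  have hRinv : R * R⁻¹ = 1 := Matrix.mul_nonsing_inv R hdetR.isUnit
  have hRinv' : R⁻¹ * R = 1 := Matrix.nonsing_inv_mul R hdetR.isUnit
  have hPinv : P⁻¹ = R⁻¹ * R⁻¹ := by rw [← hRR, Matrix.mul_inv_rev]
  set S := R⁻¹ * D * R⁻¹ with hSdef
  have hRinvherm : R⁻¹.IsHermitian := hRherm.inv
  have hSherm : S.IsHermitian := by
    unfold S
    unfold Matrix.IsHermitian
    rw [Matrix.conjTranspose_mul, Matrix.conjTranspose_mul, hRinvherm, hD]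
    rw [Matrix.mul_assoc]
  set K := (2 * δ) • (1 : Matrix n n ℝ) - S with hKdef
  have hsm : ((2 * δ) • (1 : Matrix n n ℝ)).IsHermitian := by
    simp [Matrix.IsHermitian, Matrix.conjTranspose_smul]
  have hKherm : K.IsHermitian := hsm.sub hSherm
  -- every eigenvalue of K is positive
  have heigpos : ∀ k, 0 < hKherm.eigenvalues k := by
    intro k
    set ν := hKherm.eigenvalues k with hν
    set w : n → ℝ := ⇑(hKherm.eigenvectorBasis k) with hw
    have hwne : w ≠ 0 := fun h0 => hKherm.eigenvectorBasis.orthonormal.ne_zero k (by simpa [hw] using congrArg (WithLp.toLp 2) h0)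
    have hKw : K *ᵥ w = ν • w := hKherm.mulVec_eigenvectorBasis k
    have hSw : S *ᵥ w = (2 * δ - ν) • w := by
      have : ((2 * δ) • (1 : Matrix n n ℝ)) *ᵥ w - S *ᵥ w = ν • w := by
        rw [← Matrix.sub_mulVec]; exact hKw
      have h1 : ((2 * δ) • (1 : Matrix n n ℝ)) *ᵥ w = (2 * δ) • w := by
        rw [Matrix.smul_mulVec, Matrix.one_mulVec]
      rw [h1] at this
      have h3 := sub_eq_iff_eq_add.mp this
      have h4 : S *ᵥ w = (2 * δ) • w - ν • w := by rw [h3]; abel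
      rw [h4, sub_smul]
    set u : n → ℝ := R⁻¹ *ᵥ w with hu
    have hune : u ≠ 0 := by
      intro h0
      apply hwne
      have : R *ᵥ u = w := by
        rw [hu, Matrix.mulVec_mulVec, hRinv, Matrix.one_mulVec]
      rw [← this, h0, Matrix.mulVec_zero]
    have heq : (P⁻¹ * D) *ᵥ u = (2 * δ - ν) • u := by
      have hM : P⁻¹ * D = R⁻¹ * S * R := by
        rw [hPinv, hSdef]
        calc R⁻¹ * R⁻¹ * D = R⁻¹ * R⁻¹ * D * (R⁻¹ * R) := by rw [hRinv', Matrix.mul_one]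
          _ = R⁻¹ * (R⁻¹ * D * R⁻¹) * R := by noncomm_ring
      have hcanc : R⁻¹ * S * R * R⁻¹ = R⁻¹ * S := by
        rw [Matrix.mul_assoc (R⁻¹ * S), hRinv, Matrix.mul_one]
      rw [hM, hu, Matrix.mulVec_mulVec, hcanc, ← Matrix.mulVec_mulVec, hSw,
        Matrix.mulVec_smul]
    have hroot : (P⁻¹ * D).charpoly.IsRoot (2 * δ - ν) := my_eigen_isRoot hune heq
    have := hr _ hroot
    linarith
  -- hence K is positive definite
  have hKpd : K.PosDef := my_posDef_of_eigenvalues_pos hKherm heigpos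
  -- transfer back: (2δ)•P - D = R * K * R
  have hKey : (2 * δ) • P - D = R * K * R := by
    rw [hKdef, Matrix.mul_sub, Matrix.sub_mul]
    congr 1
    · rw [Matrix.mul_smul, Matrix.smul_mul, Matrix.mul_one, hRR]
    · rw [hSdef]
      calc D = (R * R⁻¹) * D * (R⁻¹ * R) := by
              rw [hRinv, hRinv', Matrix.one_mul, Matrix.mul_one]
        _ = R * (R⁻¹ * D * R⁻¹) * R := by noncomm_ring
  rw [hKey]
  have hRt : Rᵀ = R := by
    rw [← Matrix.conjTranspose_eq_transpose_of_trivial]; exact hRherm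
  have hherm : (R * K * R).IsHermitian := by
    have h := Matrix.isHermitian_mul_mul_conjTranspose R hKherm
    rwa [show Rᴴ = R from hRherm] at h
  refine Matrix.PosDef.of_dotProduct_mulVec_pos hherm fun x hx => ?_
  have hRx : R *ᵥ x ≠ 0 := by
    intro h0
    apply hx
    have hxx : R⁻¹ *ᵥ (R *ᵥ x) = x := by
      rw [Matrix.mulVec_mulVec, hRinv', Matrix.one_mulVec]
    rw [← hxx, h0, Matrix.mulVec_zero]
  have hsplit : star x ⬝ᵥ (R * K * R) *ᵥ x = star (R *ᵥ x) ⬝ᵥ K *ᵥ (R *ᵥ x) := by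
    simp only [star_trivial]
    rw [← Matrix.mulVec_mulVec, ← Matrix.mulVec_mulVec, dotProduct_mulVec,
      ← Matrix.mulVec_transpose, hRt]
  rw [hsplit]
  exact hKpd.dotProduct_mulVec_pos hRx
end PDAux

section BlfAux
open Finset

/-- explicit bilinear form -/
def blf {d : ℕ} (M : Matrix (Fin d) (Fin d) ℝ) (u w : Fin d → ℝ) : ℝ :=
  ∑ s, ∑ t, u s * M s t * w t

lemma blf_eq {d : ℕ} (M : Matrix (Fin d) (Fin d) ℝ) (u w : Fin d → ℝ) :
    u ⬝ᵥ M *ᵥ w = blf M u w := by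
  simp [blf, dotProduct, Matrix.mulVec, Finset.mul_sum, mul_assoc]

lemma blf_add {d : ℕ} (M P : Matrix (Fin d) (Fin d) ℝ) (u w : Fin d → ℝ) :
    blf (M + P) u w = blf M u w + blf P u w := by
  unfold blf
  rw [← Finset.sum_add_distrib]
  refine Finset.sum_congr rfl fun s _ => ?_
  rw [← Finset.sum_add_distrib]
  refine Finset.sum_congr rfl fun t _ => ?_
  simp [Matrix.add_apply]; ring

lemma blf_sub {d : ℕ} (M P : Matrix (Fin d) (Fin d) ℝ) (u w : Fin d → ℝ) :
    blf (M - P) u w = blf M u w - blf P u w := by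
  unfold blf
  rw [← Finset.sum_sub_distrib]
  refine Finset.sum_congr rfl fun s _ => ?_
  rw [← Finset.sum_sub_distrib]
  refine Finset.sum_congr rfl fun t _ => ?_
  simp [Matrix.sub_apply]; ring

lemma blf_smul {d : ℕ} (c : ℝ) (M : Matrix (Fin d) (Fin d) ℝ) (u w : Fin d → ℝ) :
    blf (c • M) u w = c * blf M u w := by
  unfold blf
  rw [Finset.mul_sum]
  refine Finset.sum_congr rfl fun s _ => ?_
  rw [Finset.mul_sum]
  refine Finset.sum_congr rfl fun t _ => ?_
  simp [Matrix.smul_apply]; ring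

lemma blf_sum {d : ℕ} {ι : Type*} (s : Finset ι) (M : ι → Matrix (Fin d) (Fin d) ℝ)
    (u w : Fin d → ℝ) :
    blf (∑ k ∈ s, M k) u w = ∑ k ∈ s, blf (M k) u w := by
  classical
  induction s using Finset.induction_on with
  | empty => simp [blf]
  | insert _ _ hk ih =>
      rw [Finset.sum_insert hk, Finset.sum_insert hk, blf_add, ih]

lemma blf_symm {d : ℕ} {M : Matrix (Fin d) (Fin d) ℝ} (hM : M.IsSymm) (u w : Fin d → ℝ) :
    blf M u w = blf M w u := by
  unfold blf
  rw [Finset.sum_comm]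
  refine Finset.sum_congr rfl fun s _ => Finset.sum_congr rfl fun t _ => ?_
  rw [hM.apply t s]   -- check direction
  ring

lemma blf_psd {d : ℕ} {M : Matrix (Fin d) (Fin d) ℝ} (hM : M.PosSemidef) (u : Fin d → ℝ) :
    0 ≤ blf M u u := by
  rw [← blf_eq]
  simpa using hM.dotProduct_mulVec_nonneg u

lemma blf_pd {d : ℕ} {M : Matrix (Fin d) (Fin d) ℝ} (hM : M.PosDef) {u : Fin d → ℝ}
    (hu : u ≠ 0) : 0 < blf M u u := by
  rw [← blf_eq]
  simpa using hM.dotProduct_mulVec_pos hu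

lemma blf_pd_eq_zero {d : ℕ} {M : Matrix (Fin d) (Fin d) ℝ} (hM : M.PosDef) {u : Fin d → ℝ}
    (h : blf M u u = 0) : u = 0 := by
  by_contra hu
  exact absurd h (ne_of_gt (blf_pd hM hu))

lemma blf_expand {d : ℕ} {M : Matrix (Fin d) (Fin d) ℝ} (hM : M.IsSymm) (c : ℝ)
    (u w : Fin d → ℝ) :
    blf M (u - c • w) (u - c • w)
      = blf M u u - 2 * c * blf M u w + c * c * blf M w w := by
  have h : ∀ s t : Fin d, (u - c • w) s * M s t * (u - c • w) t
      = u s * M s t * u t - c * (u s * M s t * w t) - c * (w s * M s t * u t)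
        + c * c * (w s * M s t * w t) := by
    intro s t
    simp only [Pi.sub_apply, Pi.smul_apply, smul_eq_mul]
    ring
  unfold blf
  simp_rw [h, Finset.sum_add_distrib, Finset.sum_sub_distrib, ← Finset.mul_sum]
  have hsymm := blf_symm hM u w
  unfold blf at hsymm
  rw [← hsymm]
  ring

lemma sum_erase_comm {α : Type*} [Fintype α] [DecidableEq α] (f : α → α → ℝ) :
    ∑ i, ∑ j ∈ Finset.univ.erase i, f i j = ∑ j, ∑ i ∈ Finset.univ.erase j, f i j := by
  refine Finset.sum_comm' ?_
  intro x y
  simp [Finset.mem_erase, eq_comm, ne_comm]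

end BlfAux

section SgnAux
variable {d : ℕ}

noncomputable def sgnM (Q : Matrix (Fin d) (Fin d) ℝ) : ℝ :=
  if Q.PosSemidef then 1 else -1

lemma sgnM_sq (Q : Matrix (Fin d) (Fin d) ℝ) : sgnM Q * sgnM Q = 1 := by
  unfold sgnM; split_ifs <;> norm_num

lemma eq_sgnM_smul_absM (Q : Matrix (Fin d) (Fin d) ℝ) : Q = sgnM Q • absM Q := by
  unfold sgnM absM; split_ifs <;> simp

lemma absM_psd {Q : Matrix (Fin d) (Fin d) ℝ} (h : Q.PosSemidef ∨ (-Q).PosSemidef) :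
    (absM Q).PosSemidef := by
  unfold absM; split_ifs with h' 
  · exact h'
  · exact h.resolve_left h'

lemma herm_to_symm {k : ℕ} {M : Matrix (Fin k) (Fin k) ℝ} (h : M.IsHermitian) : M.IsSymm := by
  rwa [Matrix.IsHermitian, Matrix.conjTranspose_eq_transpose_of_trivial] at h

lemma absM_symm {Q : Matrix (Fin d) (Fin d) ℝ} (h : Q.PosSemidef ∨ (-Q).PosSemidef) :
    (absM Q).IsSymm := herm_to_symm (absM_psd h).1

lemma absM_pd (hd : 1 ≤ d) {Q : Matrix (Fin d) (Fin d) ℝ}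
    (h : Q.PosDef ∨ (-Q).PosDef) : (absM Q).PosDef := by
  have hvec : (fun _ => (1:ℝ) : Fin d → ℝ) ≠ 0 := by
    intro h0
    have := congrFun h0 ⟨0, hd⟩
    norm_num at this
  unfold absM
  rcases h with h | h
  · rw [if_pos h.posSemidef]; exact h
  · split_ifs with h'
    · exfalso
      have h1 := h'.dotProduct_mulVec_nonneg (fun _ => (1:ℝ))
      have h2 := h.dotProduct_mulVec_pos hvec
      rw [show star (fun _ => (1:ℝ) : Fin d → ℝ) = (fun _ => 1) from star_trivial _] at h1 h2
      have : (fun _ => (1:ℝ)) ⬝ᵥ (-Q) *ᵥ (fun _ => 1) = -((fun _ => (1:ℝ)) ⬝ᵥ Q *ᵥ (fun _ => 1)) := by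
        rw [Matrix.neg_mulVec, dotProduct_neg]
      rw [this] at h2
      linarith
    · exact h

lemma inDeg_herm {N d : ℕ} {A : Fin N → Fin N → Matrix (Fin d) (Fin d) ℝ}
    (hA : SignedWeights A) (i : Fin N) : (inDeg A i).IsHermitian := by
  unfold inDeg Matrix.IsHermitian
  rw [Matrix.conjTranspose_sum]
  refine Finset.sum_congr rfl fun k hk => ?_
  exact (absM_psd (hA i k fun h => (Finset.mem_erase.mp hk).1 h.symm).2).1

lemma outDeg_herm {N d : ℕ} {A : Fin N → Fin N → Matrix (Fin d) (Fin d) ℝ}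
    (hA : SignedWeights A) (i : Fin N) : (outDeg A i).IsHermitian := by
  unfold outDeg Matrix.IsHermitian
  rw [Matrix.conjTranspose_sum]
  refine Finset.sum_congr rfl fun k hk => ?_
  exact (absM_psd (hA k i (Finset.mem_erase.mp hk).1).2).1

end SgnAux

section QuadExpand

lemma quad_expand {N d : ℕ} (A : Fin N → Fin N → Matrix (Fin d) (Fin d) ℝ)
    (hA : SignedWeights A) (Dm : Fin N → Matrix (Fin d) (Fin d) ℝ)
    (x : Fin N × Fin d → ℝ) :
    x ⬝ᵥ (Lap A + blockDiag' Dm) *ᵥ x =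
      (∑ i, ∑ j ∈ Finset.univ.erase i,
        (1/2) * blf (absM (A i j))
          ((fun t => x (i,t)) - sgnM (A i j) • (fun t => x (j,t)))
          ((fun t => x (i,t)) - sgnM (A i j) • (fun t => x (j,t))))
      + ∑ i, (blf (Dm i) (fun t => x (i,t)) (fun t => x (i,t))
          + (1/2) * blf (inDeg A i) (fun t => x (i,t)) (fun t => x (i,t))
          - (1/2) * blf (outDeg A i) (fun t => x (i,t)) (fun t => x (i,t))) := by
  set X : Fin N → Fin d → ℝ := fun i t => x (i, t) with hX
  set M := Lap A + blockDiag' Dm with hM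
  -- step 1 : write as a quadruple sum
  have step1 : x ⬝ᵥ M *ᵥ x = ∑ i, ∑ j, ∑ s, ∑ t, x (i,s) * M (i,s) (j,t) * x (j,t) := by
    calc x ⬝ᵥ M *ᵥ x = ∑ i, ∑ s, ∑ j, ∑ t, x (i,s) * M (i,s) (j,t) * x (j,t) := by
          simp [dotProduct, Matrix.mulVec, Fintype.sum_prod_type, Finset.mul_sum,
            mul_assoc]
      _ = _ := by
          refine Finset.sum_congr rfl fun i _ => ?_
          exact Finset.sum_comm
  -- step 2 : per-vertex decomposition
  have step2 : ∀ i : Fin N,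
      (∑ j, ∑ s, ∑ t, x (i,s) * M (i,s) (j,t) * x (j,t))
        = blf (inDeg A i) (X i) (X i) + blf (Dm i) (X i) (X i)
          + ∑ j ∈ Finset.univ.erase i,
              (- (sgnM (A i j) * blf (absM (A i j)) (X i) (X j))) := by
    intro i
    rw [← Finset.add_sum_erase _ _ (Finset.mem_univ i)]
    congr 1
    · -- diagonal term
      have hdiag : ∀ s t, M (i,s) (i,t) = (inDeg A i + Dm i) s t := by
        intro s t
        simp [hM, Lap, _root_.blockDiag', Matrix.add_apply, inDeg]
      calc (∑ s, ∑ t, x (i,s) * M (i,s) (i,t) * x (i,t))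
          = blf (inDeg A i + Dm i) (X i) (X i) := by
            unfold blf
            refine Finset.sum_congr rfl fun s _ => Finset.sum_congr rfl fun t _ => ?_
            rw [hdiag]
        _ = _ := blf_add _ _ _ _
    · refine Finset.sum_congr rfl fun j hj => ?_
      have hij : ¬ (i = j) := fun h => (Finset.mem_erase.mp hj).1 h.symm
      have hoff : ∀ s t, M (i,s) (j,t) = -(A i j s t) := by
        intro s t
        simp [hM, Lap, _root_.blockDiag', Matrix.add_apply, hij]
      have hpt : ∀ s t, x (i,s) * M (i,s) (j,t) * x (j,t)
          = -(x (i,s) * A i j s t * x (j,t)) := by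
        intro s t; rw [hoff]; ring
      have hblfA : blf (A i j) (X i) (X j) = sgnM (A i j) * blf (absM (A i j)) (X i) (X j) := by
        conv_lhs => rw [eq_sgnM_smul_absM (A i j)]
        exact blf_smul _ _ _ _
      simp_rw [hpt, Finset.sum_neg_distrib]
      rw [← hblfA]
      rfl
  rw [step1]
  simp_rw [step2]
  -- step 3: expand inDeg as a sum over edges and merge
  have hin : ∀ i : Fin N, blf (inDeg A i) (X i) (X i)
      = ∑ j ∈ Finset.univ.erase i, blf (absM (A i j)) (X i) (X i) := by
    intro i; exact blf_sum _ _ _ _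
  have step3 : ∀ i : Fin N,
      blf (inDeg A i) (X i) (X i) + blf (Dm i) (X i) (X i)
        + ∑ j ∈ Finset.univ.erase i, (- (sgnM (A i j) * blf (absM (A i j)) (X i) (X j)))
      = blf (Dm i) (X i) (X i)
        + ∑ j ∈ Finset.univ.erase i,
            (blf (absM (A i j)) (X i) (X i) - sgnM (A i j) * blf (absM (A i j)) (X i) (X j)) := by
    intro i
    rw [hin i, Finset.sum_sub_distrib, Finset.sum_neg_distrib]
    ring
  simp_rw [step3]
  -- step 4: per-edge identity
  have step4 : ∀ i : Fin N, ∀ j ∈ Finset.univ.erase i,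
      blf (absM (A i j)) (X i) (X i) - sgnM (A i j) * blf (absM (A i j)) (X i) (X j)
      = (1/2) * blf (absM (A i j)) (X i - sgnM (A i j) • X j) (X i - sgnM (A i j) • X j)
        + (1/2) * blf (absM (A i j)) (X i) (X i)
        - (1/2) * blf (absM (A i j)) (X j) (X j) := by
    intro i j hj
    have hij : i ≠ j := fun h => (Finset.mem_erase.mp hj).1 h.symm
    have hsymm : (absM (A i j)).IsSymm := absM_symm (hA i j hij).2
    rw [blf_expand hsymm, sgnM_sq]
    ring
  have step5 : ∀ i : Fin N,
      (∑ j ∈ Finset.univ.erase i,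
          (blf (absM (A i j)) (X i) (X i) - sgnM (A i j) * blf (absM (A i j)) (X i) (X j)))
      = ∑ j ∈ Finset.univ.erase i,
          ((1/2) * blf (absM (A i j)) (X i - sgnM (A i j) • X j) (X i - sgnM (A i j) • X j)
            + (1/2) * blf (absM (A i j)) (X i) (X i)
            - (1/2) * blf (absM (A i j)) (X j) (X j)) := by
    intro i
    exact Finset.sum_congr rfl (step4 i)
  simp_rw [step5]
  -- step 6: split the edge sums and regroup
  have split : ∀ i : Fin N,
      (∑ j ∈ Finset.univ.erase i,
        ((1/2) * blf (absM (A i j)) (X i - sgnM (A i j) • X j) (X i - sgnM (A i j) • X j)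
          + (1/2) * blf (absM (A i j)) (X i) (X i)
          - (1/2) * blf (absM (A i j)) (X j) (X j)))
      = (∑ j ∈ Finset.univ.erase i,
          (1/2) * blf (absM (A i j)) (X i - sgnM (A i j) • X j) (X i - sgnM (A i j) • X j))
        + (1/2) * blf (inDeg A i) (X i) (X i)
        - ∑ j ∈ Finset.univ.erase i, (1/2) * blf (absM (A i j)) (X j) (X j) := by
    intro i
    rw [Finset.sum_sub_distrib, Finset.sum_add_distrib, hin i, Finset.mul_sum]
  simp_rw [split]
  -- swap the double sum for the out-degree part
  have hswap : ∑ i : Fin N, ∑ j ∈ Finset.univ.erase i, (1/2) * blf (absM (A i j)) (X j) (X j)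
      = ∑ j : Fin N, (1/2) * blf (outDeg A j) (X j) (X j) := by
    rw [sum_erase_comm (fun i j => (1/2) * blf (absM (A i j)) (X j) (X j))]
    refine Finset.sum_congr rfl fun j _ => ?_
    rw [← Finset.mul_sum]
    congr 1
    rw [outDeg, blf_sum]
  have regroup : ∀ i ∈ (Finset.univ : Finset (Fin N)),
      blf (Dm i) (X i) (X i)
        + ((∑ j ∈ Finset.univ.erase i,
            (1/2) * blf (absM (A i j)) (X i - sgnM (A i j) • X j) (X i - sgnM (A i j) • X j))
          + (1/2) * blf (inDeg A i) (X i) (X i)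
          - ∑ j ∈ Finset.univ.erase i, (1/2) * blf (absM (A i j)) (X j) (X j))
      = (∑ j ∈ Finset.univ.erase i,
            (1/2) * blf (absM (A i j)) (X i - sgnM (A i j) • X j) (X i - sgnM (A i j) • X j))
        + ((blf (Dm i) (X i) (X i) + (1/2) * blf (inDeg A i) (X i) (X i))
          - ∑ j ∈ Finset.univ.erase i, (1/2) * blf (absM (A i j)) (X j) (X j)) := by
    intro i _; ring
  rw [Finset.sum_congr rfl regroup, Finset.sum_add_distrib, Finset.sum_sub_distrib, hswap]
  conv_rhs => rw [Finset.sum_sub_distrib]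
end QuadExpand

section MainReal

lemma quad_pos {N d : ℕ} (hd : 1 ≤ d)
    (A : Fin N → Fin N → Matrix (Fin d) (Fin d) ℝ) (hA : SignedWeights A)
    (V1 V2 : Finset (Fin N)) (hAss : Assumption1 A V1 V2)
    (δ : Fin N → ℝ) (hδ0 : ∀ i, 0 ≤ δ i)
    (B : Fin N → Matrix (Fin d) (Fin d) ℝ)
    (hBsd : ∀ i, (B i).PosSemidef ∨ (-(B i)).PosSemidef)
    (hBpd : ∀ i ∈ V1, (absM (B i)).PosDef)
    (hδC : ∀ i ∈ V1, ∀ μ : ℝ,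
      (((absM (B i))⁻¹ * (outDeg A i - inDeg A i)).charpoly).IsRoot μ → μ / 2 < δ i)
    (x : Fin N × Fin d → ℝ) (hx : x ≠ 0) :
    0 < x ⬝ᵥ (Lap A + blockDiag' fun i => δ i • absM (B i)) *ᵥ x := by
  obtain ⟨hV12, hV1V2, hpath, hdom⟩ := hAss
  set X : Fin N → Fin d → ℝ := fun i t => x (i, t) with hX
  set Dm : Fin N → Matrix (Fin d) (Fin d) ℝ := fun i => δ i • absM (B i) with hDm
  set E : Fin N → Fin N → ℝ := fun i j =>
    blf (absM (A i j)) (X i - sgnM (A i j) • X j) (X i - sgnM (A i j) • X j) with hE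
  set F : Fin N → ℝ := fun i =>
    blf (Dm i) (X i) (X i) + (1/2) * blf (inDeg A i) (X i) (X i)
      - (1/2) * blf (outDeg A i) (X i) (X i) with hF
  have hexp : x ⬝ᵥ (Lap A + blockDiag' Dm) *ᵥ x
      = (∑ i, ∑ j ∈ Finset.univ.erase i, (1/2) * E i j) + ∑ i, F i :=
    quad_expand A hA Dm x
  -- nonnegativity of the edge terms
  have hEnn : ∀ i : Fin N, ∀ j ∈ Finset.univ.erase i, 0 ≤ (1/2) * E i j := by
    intro i j hj
    have hij : i ≠ j := fun h => (Finset.mem_erase.mp hj).1 h.symm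
    have := blf_psd (absM_psd (hA i j hij).2)
      (X i - sgnM (A i j) • X j)
    positivity
  -- positive definiteness at V1 vertices
  have hHpd : ∀ i ∈ V1, ((2 * δ i) • absM (B i) - (outDeg A i - inDeg A i)).PosDef := by
    intro i hi
    exact deltaP_pd (hBpd i hi) ((outDeg_herm hA i).sub (inDeg_herm hA i)) (δ i) (hδC i hi)
  have hFV1 : ∀ i ∈ V1, F i
      = (1/2) * blf ((2 * δ i) • absM (B i) - (outDeg A i - inDeg A i)) (X i) (X i) := by
    intro i hi
    rw [blf_sub, blf_sub, blf_smul, hF]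
    simp only [hDm]
    rw [blf_smul]
    ring
  have hmem : ∀ i : Fin N, i ∈ V1 ∨ i ∈ V2 := by
    intro i
    have : i ∈ V1 ∪ V2 := by rw [hV12]; exact Finset.mem_univ i
    exact Finset.mem_union.mp this
  have hFnn : ∀ i : Fin N, 0 ≤ F i := by
    intro i
    rcases hmem i with hi | hi
    · rw [hFV1 i hi]
      have := blf_psd (hHpd i hi).posSemidef (X i)
      positivity
    · have h1 : 0 ≤ blf (Dm i) (X i) (X i) := by
        simp only [hDm]
        rw [blf_smul]
        exact mul_nonneg (hδ0 i) (blf_psd (absM_psd (hBsd i)) (X i))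
      have h2 : 0 ≤ blf (inDeg A i - outDeg A i) (X i) (X i) := blf_psd (hdom i hi) (X i)
      rw [blf_sub] at h2
      rw [hF]
      linarith
  by_contra hle
  push_neg at hle
  have hT1nn : 0 ≤ ∑ i, ∑ j ∈ Finset.univ.erase i, (1/2) * E i j :=
    Finset.sum_nonneg fun i _ => Finset.sum_nonneg (hEnn i)
  have hT2nn : 0 ≤ ∑ i, F i := Finset.sum_nonneg fun i _ => hFnn i
  have hT1z : ∑ i, ∑ j ∈ Finset.univ.erase i, (1/2) * E i j = 0 := by linarith
  have hT2z : ∑ i, F i = 0 := by linarith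
  have hFz : ∀ i : Fin N, F i = 0 := by
    have := (Finset.sum_eq_zero_iff_of_nonneg fun i _ => hFnn i).mp hT2z
    exact fun i => this i (Finset.mem_univ i)
  have hEz : ∀ i : Fin N, ∀ j ∈ Finset.univ.erase i, E i j = 0 := by
    have hrows := (Finset.sum_eq_zero_iff_of_nonneg fun i _ =>
      Finset.sum_nonneg (hEnn i)).mp hT1z
    intro i j hj
    have := (Finset.sum_eq_zero_iff_of_nonneg (hEnn i)).mp (hrows i (Finset.mem_univ i)) j hj
    linarith
  -- V1 vertices vanish
  have hzero1 : ∀ i ∈ V1, X i = 0 := by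
    intro i hi
    have h0 : blf ((2 * δ i) • absM (B i) - (outDeg A i - inDeg A i)) (X i) (X i) = 0 := by
      have := hFz i
      rw [hFV1 i hi] at this
      linarith
    exact blf_pd_eq_zero (hHpd i hi) h0
  -- propagate along positive–negative paths
  have hall : ∀ i : Fin N, X i = 0 := by
    intro i
    rcases hmem i with hi | hi
    · exact hzero1 i hi
    · obtain ⟨i0, hi0, m, hm, p, hp0, hplast, hedges⟩ := hpath i hi
      have hstep : ∀ s : Fin (m+1), X (p s) = 0 := by
        intro s
        induction s using Fin.induction with
        | zero => rw [hp0]; exact hzero1 i0 hi0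
        | succ s ih =>
            by_cases hab : p s.succ = p s.castSucc
            · rw [hab]; exact ih
            · have hpd : (absM (A (p s.succ) (p s.castSucc))).PosDef := absM_pd hd (hedges s)
              have hb : p s.castSucc ∈ Finset.univ.erase (p s.succ) :=
                Finset.mem_erase.mpr ⟨fun h => hab h.symm, Finset.mem_univ _⟩
              have he0 := hEz (p s.succ) (p s.castSucc) hb
              have hvz := blf_pd_eq_zero hpd he0
              have : X (p s.succ) = sgnM (A (p s.succ) (p s.castSucc)) • X (p s.castSucc) :=
                sub_eq_zero.mp hvz
              rw [this, ih, smul_zero]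
      have := hstep (Fin.last m)
      rwa [hplast] at this
  apply hx
  funext p
  have := congrFun (hall p.1) p.2
  simpa [hX] using this

end MainReal

/-- Theorem 1: positive spectrum of the directed grounded Laplacian.
The bound `δ_i > C_i = ½ λ_max[|B_i|⁻¹(Σ|A_{ji}| − Σ|A_{ij}|)]` is expressed by
requiring `δ_i > μ/2` for every (real) eigenvalue `μ` of that matrix — all of whose
eigenvalues are real. -/
theorem stmt4 (N d : ℕ) (hN : 1 ≤ N) (hd : 1 ≤ d)
    (A : Fin N → Fin N → Matrix (Fin d) (Fin d) ℝ) (hA : SignedWeights A)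
    (V1 V2 : Finset (Fin N)) (hAss : Assumption1 A V1 V2)
    (δ : Fin N → ℝ) (hδ0 : ∀ i, 0 ≤ δ i)
    (B : Fin N → Matrix (Fin d) (Fin d) ℝ)
    (hBsymm : ∀ i, (B i).IsSymm)
    (hBsd : ∀ i, (B i).PosSemidef ∨ (-(B i)).PosSemidef)
    (hBpd : ∀ i ∈ V1, (absM (B i)).PosDef)
    (hδC : ∀ i ∈ V1, ∀ μ : ℝ,
      (((absM (B i))⁻¹ * (outDeg A i - inDeg A i)).charpoly).IsRoot μ → μ / 2 < δ i) :
    ∀ μ : ℂ,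
      (((Lap A + blockDiag' fun i => δ i • absM (B i)).map
        (Complex.ofReal)).charpoly).IsRoot μ → 0 < μ.re := by
  intro μ hroot
  set L := Lap A + blockDiag' fun i => δ i • absM (B i) with hL
  obtain ⟨v, hv, heig⟩ := (my_isRoot_charpoly_iff (L.map Complex.ofReal) μ).mp hroot
  set a : Fin N × Fin d → ℝ := fun p => (v p).re with ha
  set b : Fin N × Fin d → ℝ := fun p => (v p).im with hb
  have hma : ∀ p, ∑ q, L p q * a q = μ.re * a p - μ.im * b p := by
    intro p
    have hre := congrArg Complex.re (congrFun heig p)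
    simpa [Matrix.mulVec, dotProduct, Complex.re_sum, Complex.mul_re] using hre
  have hmb : ∀ p, ∑ q, L p q * b q = μ.re * b p + μ.im * a p := by
    intro p
    have him := congrArg Complex.im (congrFun heig p)
    simpa [Matrix.mulVec, dotProduct, Complex.im_sum, Complex.mul_im] using him
  have hQa : a ⬝ᵥ L *ᵥ a = μ.re * (∑ p, a p * a p) - μ.im * (∑ p, a p * b p) := by
    have hpt : ∀ p : Fin N × Fin d, a p * (μ.re * a p - μ.im * b p)
        = μ.re * (a p * a p) - μ.im * (a p * b p) := fun p => by ring
    calc a ⬝ᵥ L *ᵥ a = ∑ p, a p * (∑ q, L p q * a q) := by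
          simp [dotProduct, Matrix.mulVec]
      _ = ∑ p, a p * (μ.re * a p - μ.im * b p) :=
          Finset.sum_congr rfl fun p _ => by rw [hma p]
      _ = _ := by simp_rw [hpt, Finset.sum_sub_distrib, ← Finset.mul_sum]
  have hQb : b ⬝ᵥ L *ᵥ b = μ.re * (∑ p, b p * b p) + μ.im * (∑ p, a p * b p) := by
    have hpt : ∀ p : Fin N × Fin d, b p * (μ.re * b p + μ.im * a p)
        = μ.re * (b p * b p) + μ.im * (b p * a p) := fun p => by ring
    calc b ⬝ᵥ L *ᵥ b = ∑ p, b p * (∑ q, L p q * b q) := by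
          simp [dotProduct, Matrix.mulVec]
      _ = ∑ p, b p * (μ.re * b p + μ.im * a p) :=
          Finset.sum_congr rfl fun p _ => by rw [hmb p]
      _ = _ := by
          simp_rw [hpt, Finset.sum_add_distrib, ← Finset.mul_sum]
          congr 2
          exact Finset.sum_congr rfl fun p _ => by ring
  have hQsum : a ⬝ᵥ L *ᵥ a + b ⬝ᵥ L *ᵥ b
      = μ.re * ((∑ p, a p * a p) + (∑ p, b p * b p)) := by
    rw [hQa, hQb]; ring
  -- a and b are not both zero
  have hab : a ≠ 0 ∨ b ≠ 0 := by
    by_contra h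
    push_neg at h
    apply hv
    funext p
    have h1 := congrFun h.1 p
    have h2 := congrFun h.2 p
    simp only [ha, hb, Pi.zero_apply] at h1 h2
    exact Complex.ext h1 h2
  have hQnn : ∀ y : Fin N × Fin d → ℝ, 0 ≤ y ⬝ᵥ L *ᵥ y := by
    intro y
    by_cases hy : y = 0
    · simp [hy]
    · exact (quad_pos hd A hA V1 V2 hAss δ hδ0 B hBsd hBpd hδC y hy).le
  have hsq : ∀ y : Fin N × Fin d → ℝ, 0 ≤ ∑ p, y p * y p := fun y =>
    Finset.sum_nonneg fun p _ => mul_self_nonneg _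
  have hsqpos : ∀ y : Fin N × Fin d → ℝ, y ≠ 0 → 0 < ∑ p, y p * y p := by
    intro y hy
    obtain ⟨p, hp⟩ := Function.ne_iff.mp hy
    exact Finset.sum_pos' (fun q _ => mul_self_nonneg _)
      ⟨p, Finset.mem_univ p, by have := mul_self_pos.mpr hp; exact this⟩
  have hQpos : 0 < a ⬝ᵥ L *ᵥ a + b ⬝ᵥ L *ᵥ b := by
    rcases hab with h | h
    · have := quad_pos hd A hA V1 V2 hAss δ hδ0 B hBsd hBpd hδC a h
      have := hQnn b
      linarith
    · have := quad_pos hd A hA V1 V2 hAss δ hδ0 B hBsd hBpd hδC b h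
      have := hQnn a
      linarith
  have hSpos : 0 < (∑ p, a p * a p) + (∑ p, b p * b p) := by
    rcases hab with h | h
    · have := hsqpos a h; have := hsq b; linarith
    · have := hsqpos b h; have := hsq a; linarith
  nlinarith [hQsum, hQpos, hSpos]
end

section
/- (Lemma 3: positive definiteness of the undirected grounded Laplacian.) Let A_{ij} be a signed matrix-weight assignment on N vertices with A_{ij} = A_{ji} for all i ≠ j, and suppose Assumption 2 holds with partition V1 ∪ V2. Let δ_1,…,δ_N ≥ 0 and let B_1,…,B_N ∈ ℝ^{d×d} be symmetric, each positive semidefinite or negative semidefinite, such that |B_i| is positive definite and δ_i > 0 for every i ∈ V1. Then the grounded Laplacian L_B = L + blockdiag(δ_1|B_1|,…,δ_N|B_N|) is symmetric positive definite; in particular, every eigenvalue of L_B is a positive real number. -/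
open Matrix Filter
open scoped Classical

/-- Assumption 2: `{1,…,N} = V1 ∪ V2` disjointly and every `j ∈ V2` is reached
from some `i ∈ V1` by a positive–negative path. -/
def Assumption2 {N d : ℕ} (A : Fin N → Fin N → Matrix (Fin d) (Fin d) ℝ)
    (V1 V2 : Finset (Fin N)) : Prop :=
  V1 ∪ V2 = Finset.univ ∧ V1 ∩ V2 = ∅ ∧ ∀ j ∈ V2, ∃ i ∈ V1, PNPath A i j


section Stmt8Aux

open scoped ComplexOrder
open Polynomial

variable {N d : ℕ}

lemma stmt8_absM_psd {Q : Matrix (Fin d) (Fin d) ℝ} (hQ : Q.PosSemidef ∨ (-Q).PosSemidef) :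
    (absM Q).PosSemidef := by
  unfold absM
  split_ifs with h
  · exact h
  · exact hQ.resolve_left h

lemma stmt8_absM_isSymm {Q : Matrix (Fin d) (Fin d) ℝ} (hQ : Q.IsSymm) : (absM Q).IsSymm := by
  unfold absM
  split_ifs with h
  · exact hQ
  · simpa [Matrix.IsSymm] using congrArg Neg.neg hQ

lemma stmt8_posdef_qf_eq_zero {Q : Matrix (Fin d) (Fin d) ℝ} (hQ : Q.PosDef) {w : Fin d → ℝ}
    (h : w ⬝ᵥ Q *ᵥ w = 0) : w = 0 := by
  by_contra hw
  have := hQ.dotProduct_mulVec_pos hw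
  simp only [star_trivial] at this
  rw [h] at this
  exact lt_irrefl 0 this

lemma stmt8_absM_qf_zero {Q : Matrix (Fin d) (Fin d) ℝ}
    (hdef : Q.PosDef ∨ (-Q).PosDef) {w : Fin d → ℝ}
    (h : w ⬝ᵥ absM Q *ᵥ w = 0) : w = 0 := by
  unfold absM at h
  split_ifs at h with hp
  · rcases hdef with hd | hd
    · exact stmt8_posdef_qf_eq_zero hd h
    · by_contra hw
      have h1 := hd.dotProduct_mulVec_pos hw
      simp only [star_trivial, neg_mulVec, dotProduct_neg, h] at h1
      simp at h1
  · rcases hdef with hd | hd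
    · exact absurd hd.posSemidef hp
    · exact stmt8_posdef_qf_eq_zero hd h

def stmt8_pblk (i j : Fin N) (Q : Matrix (Fin d) (Fin d) ℝ) :
    Matrix (Fin N × Fin d) (Fin N × Fin d) ℝ :=
  fun p q => if p.1 = i ∧ q.1 = j then Q p.2 q.2 else 0

lemma stmt8_qf_pblk (i j : Fin N) (Q : Matrix (Fin d) (Fin d) ℝ)
    (x : Fin N × Fin d → ℝ) :
    x ⬝ᵥ (stmt8_pblk i j Q) *ᵥ x = (fun a => x (i,a)) ⬝ᵥ Q *ᵥ (fun a => x (j,a)) := by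
  simp only [dotProduct, mulVec, stmt8_pblk, Fintype.sum_prod_type]
  have h1 : ∀ k : Fin N, ∀ a : Fin d,
      (∑ l : Fin N, ∑ b : Fin d, (if k = i ∧ l = j then Q a b else 0) * x (l,b))
      = if k = i then ∑ b : Fin d, Q a b * x (j,b) else 0 := by
    intro k a
    by_cases hk : k = i
    · subst hk; simp
    · simp [hk]
  simp only [h1]
  simp

lemma stmt8_qf_sum {α : Type*} (s : Finset α)
    (M : α → Matrix (Fin N × Fin d) (Fin N × Fin d) ℝ)
    (x : Fin N × Fin d → ℝ) :
    x ⬝ᵥ (∑ t ∈ s, M t) *ᵥ x = ∑ t ∈ s, x ⬝ᵥ (M t) *ᵥ x := by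
  classical
  induction s using Finset.induction_on with
  | empty => simp [mulVec]
  | insert _ _ hnot ih =>
    rw [Finset.sum_insert hnot, Finset.sum_insert hnot, Matrix.add_mulVec, dotProduct_add, ih]

lemma stmt8_lap_decomp (A : Fin N → Fin N → Matrix (Fin d) (Fin d) ℝ) :
    Lap A = ∑ i : Fin N, ∑ j ∈ Finset.univ.erase i,
      (stmt8_pblk i i (absM (A i j)) + stmt8_pblk i j (-(A i j))) := by
  ext ⟨k,a⟩ ⟨l,b⟩
  simp only [Matrix.sum_apply, Matrix.add_apply, stmt8_pblk, Lap, Matrix.neg_apply]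
  by_cases hkl : k = l
  · subst hkl
    have h1 : ∀ i : Fin N, ∀ j ∈ Finset.univ.erase i,
        ((if k = i ∧ k = i then absM (A i j) a b else 0) +
          (if k = i ∧ k = j then -(A i j a b) else 0))
        = if k = i then absM (A i j) a b else 0 := by
      intro i j hj
      have hji : j ≠ i := (Finset.mem_erase.mp hj).1
      by_cases hk : k = i
      · subst hk
        simp [fun h : k = j => hji h.symm, (Ne.symm hji)]
      · simp [hk]
    rw [Finset.sum_congr rfl fun i _ => Finset.sum_congr rfl fun j hj => h1 i j hj]
    simp [Finset.sum_ite_eq' Finset.univ k]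
  · have h1 : ∀ i : Fin N, ∀ j ∈ Finset.univ.erase i,
        ((if k = i ∧ l = i then absM (A i j) a b else 0) +
          (if k = i ∧ l = j then -(A i j a b) else 0))
        = if k = i ∧ l = j then -(A i j a b) else 0 := by
      intro i j hj
      have : ¬(k = i ∧ l = i) := fun ⟨h1', h2'⟩ => hkl (h1'.trans h2'.symm)
      simp [this]
    rw [Finset.sum_congr rfl fun i _ => Finset.sum_congr rfl fun j hj => h1 i j hj]
    have h2 : ∀ i : Fin N,
        (∑ j ∈ Finset.univ.erase i, if k = i ∧ l = j then -(A i j a b) else 0)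
        = if k = i then -(A i l a b) else 0 := by
      intro i
      by_cases hk : k = i
      · subst hk
        simp only [true_and, if_pos rfl]
        rw [Finset.sum_ite_eq (Finset.univ.erase k) l]
        simp [Finset.mem_erase, Ne.symm hkl]
      · simp [hk]
    rw [Finset.sum_congr rfl fun i _ => h2 i]
    simp [Finset.sum_ite_eq' Finset.univ k, hkl]

lemma stmt8_bd_decomp (D : Fin N → Matrix (Fin d) (Fin d) ℝ) :
    blockDiag' D = ∑ i : Fin N, stmt8_pblk i i (D i) := by
  ext ⟨k,a⟩ ⟨l,b⟩
  simp only [Matrix.sum_apply, _root_.blockDiag', stmt8_pblk]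
  by_cases hkl : k = l
  · subst hkl
    simp [Finset.sum_ite_eq' Finset.univ k]
  · have : ∀ i : Fin N, (if k = i ∧ l = i then D i a b else 0) = 0 := by
      intro i
      have : ¬(k = i ∧ l = i) := fun ⟨h1', h2'⟩ => hkl (h1'.trans h2'.symm)
      simp [this]
    simp [this, hkl]

lemma stmt8_swap_sum (t : Fin N → Fin N → ℝ) :
    ∑ i : Fin N, ∑ j ∈ Finset.univ.erase i, t i j
      = ∑ i : Fin N, ∑ j ∈ Finset.univ.erase i, t j i := by
  have key : ∀ u : Fin N → Fin N → ℝ,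
      (∑ i : Fin N, ∑ j ∈ Finset.univ.erase i, u i j)
      = ∑ i : Fin N, ∑ j : Fin N, if j = i then 0 else u i j := by
    intro u
    refine Finset.sum_congr rfl fun i _ => ?_
    rw [← Finset.sum_erase_add _ _ (Finset.mem_univ i)]
    simp only [if_pos, add_zero, if_true]
    exact Finset.sum_congr rfl fun j hj => (if_neg (Finset.mem_erase.mp hj).1).symm
  rw [key, key fun i j => t j i]
  refine Finset.sum_comm.trans ?_
  refine Finset.sum_congr rfl fun i _ => Finset.sum_congr rfl fun j _ => ?_
  by_cases h : i = j
  · subst h; simp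
  · rw [if_neg h, if_neg (Ne.symm h)]

lemma stmt8_pair_nonneg {Q : Matrix (Fin d) (Fin d) ℝ}
    (hsd : Q.PosSemidef ∨ (-Q).PosSemidef) (u w : Fin d → ℝ) :
    0 ≤ (u ⬝ᵥ absM Q *ᵥ u - u ⬝ᵥ Q *ᵥ w) + (w ⬝ᵥ absM Q *ᵥ w - w ⬝ᵥ Q *ᵥ u) := by
  unfold absM
  split_ifs with hp
  · have h := hp.dotProduct_mulVec_nonneg (u - w)
    simp only [star_trivial] at h
    have hexp : (u - w) ⬝ᵥ Q *ᵥ (u - w)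
        = u ⬝ᵥ Q *ᵥ u - u ⬝ᵥ Q *ᵥ w - (w ⬝ᵥ Q *ᵥ u - w ⬝ᵥ Q *ᵥ w) := by
      rw [mulVec_sub, dotProduct_sub, sub_dotProduct, sub_dotProduct]
      ring
    rw [hexp] at h
    linarith
  · have hq := hsd.resolve_left hp
    have h := hq.dotProduct_mulVec_nonneg (u + w)
    simp only [star_trivial] at h
    have hexp : (u + w) ⬝ᵥ (-Q) *ᵥ (u + w)
        = -(u ⬝ᵥ Q *ᵥ u) - u ⬝ᵥ Q *ᵥ w - w ⬝ᵥ Q *ᵥ u - (w ⬝ᵥ Q *ᵥ w) := by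
      rw [neg_mulVec, dotProduct_neg, mulVec_add, dotProduct_add, add_dotProduct, add_dotProduct]
      ring
    rw [hexp] at h
    have g1 : u ⬝ᵥ (-Q) *ᵥ u = -(u ⬝ᵥ Q *ᵥ u) := by rw [neg_mulVec, dotProduct_neg]
    have g2 : w ⬝ᵥ (-Q) *ᵥ w = -(w ⬝ᵥ Q *ᵥ w) := by rw [neg_mulVec, dotProduct_neg]
    rw [g1, g2]
    linarith

lemma stmt8_posdef_map_complex {n : Type*} [Fintype n] [DecidableEq n] {M : Matrix n n ℝ}
    (hM : M.PosDef) : (M.map (Complex.ofReal)).PosDef := by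
  have hsymm : ∀ p q, M q p = M p q := by
    intro p q
    have := congrFun (congrFun hM.1 q) p
    simpa [Matrix.conjTranspose_apply] using this.symm
  refine Matrix.PosDef.of_dotProduct_mulVec_pos ?_ ?_
  · ext p q
    simp only [Matrix.conjTranspose_apply, Matrix.map_apply, Complex.star_def,
      Complex.conj_ofReal]
    exact congrArg _ (hsymm p q)
  · intro x hx
    set a : n → ℝ := fun p => (x p).re with ha
    set b : n → ℝ := fun p => (x p).im with hb
    have key : star x ⬝ᵥ (M.map Complex.ofReal) *ᵥ x
        = ((a ⬝ᵥ M *ᵥ a + b ⬝ᵥ M *ᵥ b : ℝ) : ℂ) := by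
      have expand : star x ⬝ᵥ (M.map Complex.ofReal) *ᵥ x
          = ∑ p : n, ∑ q : n, (starRingEnd ℂ) (x p) * ((M p q : ℂ) * x q) := by
        simp [dotProduct, mulVec, Finset.mul_sum, Complex.star_def]
      apply Complex.ext
      · rw [expand, Complex.re_sum]
        have : ∀ p : n, (∑ q : n, (starRingEnd ℂ) (x p) * ((M p q : ℂ) * x q)).re
            = ∑ q : n, (M p q * (a p * a q) + M p q * (b p * b q)) := by
          intro p
          rw [Complex.re_sum]
          refine Finset.sum_congr rfl fun q _ => ?_
          simp [Complex.mul_re, Complex.mul_im, ha, hb]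
          ring
        rw [Finset.sum_congr rfl fun p _ => this p]
        simp only [Complex.ofReal_re]
        simp only [Finset.sum_add_distrib]
        congr 1 <;> simp [dotProduct, mulVec, Finset.mul_sum] <;>
          exact Finset.sum_congr rfl fun p _ => Finset.sum_congr rfl fun q _ => by ring
      · rw [expand, Complex.im_sum]
        have : ∀ p : n, (∑ q : n, (starRingEnd ℂ) (x p) * ((M p q : ℂ) * x q)).im
            = ∑ q : n, (M p q * (a p * b q) - M p q * (b p * a q)) := by
          intro p
          rw [Complex.im_sum]
          refine Finset.sum_congr rfl fun q _ => ?_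
          simp [Complex.mul_re, Complex.mul_im, ha, hb]
          ring
        rw [Finset.sum_congr rfl fun p _ => this p]
        simp only [Complex.ofReal_im]
        set S := ∑ p : n, ∑ q : n, (M p q * (a p * b q) - M p q * (b p * a q)) with hS
        have hneg : S = -S := by
          nth_rewrite 1 [hS, Finset.sum_comm]
          rw [← Finset.sum_neg_distrib]
          refine Finset.sum_congr rfl fun p _ => ?_
          rw [← Finset.sum_neg_distrib]
          refine Finset.sum_congr rfl fun q _ => ?_
          rw [hsymm p q]
          ring
        linarith
    rw [key]
    have hab : a ≠ 0 ∨ b ≠ 0 := by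
      by_contra hc
      push_neg at hc
      apply hx
      funext p
      have h1 := congrFun hc.1 p
      have h2 := congrFun hc.2 p
      simp only [ha, hb, Pi.zero_apply] at h1 h2
      exact Complex.ext h1 h2
    have hpos : 0 < a ⬝ᵥ M *ᵥ a + b ⬝ᵥ M *ᵥ b := by
      have hqa := hM.posSemidef.dotProduct_mulVec_nonneg a
      have hqb := hM.posSemidef.dotProduct_mulVec_nonneg b
      simp only [star_trivial] at hqa hqb
      rcases hab with h | h
      · have := hM.dotProduct_mulVec_pos h
        simp only [star_trivial] at this
        linarith
      · have := hM.dotProduct_mulVec_pos h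
        simp only [star_trivial] at this
        linarith
    exact Complex.zero_lt_real.mpr hpos

lemma stmt8_eig_real_pos {n : Type*} [Fintype n] [DecidableEq n] {M : Matrix n n ℝ}
    (hPD : M.PosDef) (μ : ℂ)
    (h : ((M.map (Complex.ofReal)).charpoly).IsRoot μ) : μ.im = 0 ∧ 0 < μ.re := by
  have hPDc := stmt8_posdef_map_complex hPD
  set Mc := M.map (Complex.ofReal) with hMc
  have hdet : (μ • (1 : Matrix n n ℂ) - Mc).det = 0 := by
    have h1 : (charmatrix Mc).map (Polynomial.eval μ) = μ • 1 - Mc := by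
      ext p q
      by_cases hpq : p = q
      · subst hpq
        simp [charmatrix_apply_eq, Matrix.smul_apply, Matrix.one_apply]
      · simp [charmatrix_apply_ne _ _ _ hpq, Matrix.one_apply, hpq]
    rw [← h1, ← Polynomial.coe_evalRingHom, ← RingHom.mapMatrix_apply, ← RingHom.map_det]
    exact h
  obtain ⟨v, hv0, hv⟩ := (Matrix.exists_mulVec_eq_zero_iff).mpr hdet
  have hMv : Mc *ᵥ v = μ • v := by
    rw [sub_mulVec, smul_mulVec, one_mulVec] at hv
    exact (sub_eq_zero.mp hv).symm
  have hc : 0 < star v ⬝ᵥ Mc *ᵥ v := hPDc.dotProduct_mulVec_pos hv0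
  have hs : 0 < star v ⬝ᵥ v := Matrix.dotProduct_star_self_pos_iff.mpr hv0
  have hcs : star v ⬝ᵥ Mc *ᵥ v = μ * (star v ⬝ᵥ v) := by
    rw [hMv, dotProduct_smul, smul_eq_mul]
  rw [Complex.lt_def] at hc hs
  simp only [Complex.zero_re, Complex.zero_im] at hc hs
  obtain ⟨hcre, hcim⟩ := hc
  obtain ⟨hsre, hsim⟩ := hs
  rw [hcs] at hcre hcim
  rw [Complex.mul_re, ← hsim] at hcre
  rw [Complex.mul_im, ← hsim] at hcim
  simp only [mul_zero, sub_zero, zero_add] at hcre hcim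
  constructor
  · rcases mul_eq_zero.mp hcim.symm with h' | h'
    · exact h'
    · exact absurd h' (ne_of_gt hsre)
  · nlinarith

end Stmt8Aux

/-- Lemma 3: positive definiteness of the undirected grounded
Laplacian; in particular every eigenvalue of `L_B` is a positive real number. -/
theorem stmt8 (N d : ℕ) (hN : 1 ≤ N) (hd : 1 ≤ d)
    (A : Fin N → Fin N → Matrix (Fin d) (Fin d) ℝ) (hA : SignedWeights A)
    (hund : ∀ i j : Fin N, i ≠ j → A i j = A j i)
    (V1 V2 : Finset (Fin N)) (hAss : Assumption2 A V1 V2)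
    (δ : Fin N → ℝ) (hδ0 : ∀ i, 0 ≤ δ i)
    (B : Fin N → Matrix (Fin d) (Fin d) ℝ)
    (hBsymm : ∀ i, (B i).IsSymm)
    (hBsd : ∀ i, (B i).PosSemidef ∨ (-(B i)).PosSemidef)
    (hV1 : ∀ i ∈ V1, (absM (B i)).PosDef ∧ 0 < δ i) :
    (Lap A + blockDiag' fun i => δ i • absM (B i)).PosDef ∧
    ∀ μ : ℂ,
      (((Lap A + blockDiag' fun i => δ i • absM (B i)).map
        (Complex.ofReal)).charpoly).IsRoot μ → μ.im = 0 ∧ 0 < μ.re := by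
  have hABsymm : ∀ i j : Fin N, i ≠ j → (A i j).IsSymm := fun i j h => (hA i j h).1
  have herm : (Lap A + _root_.blockDiag' fun i => δ i • absM (B i)).IsHermitian := by
    have h1 : (Lap A).IsHermitian := by
      refine Matrix.IsHermitian.ext fun p q => ?_
      obtain ⟨k, a⟩ := p
      obtain ⟨l, b⟩ := q
      simp only [star_trivial, Lap]
      by_cases hkl : k = l
      · subst hkl
        simp only [if_pos rfl]
        rw [Matrix.sum_apply, Matrix.sum_apply]
        refine Finset.sum_congr rfl fun j hj => ?_
        exact (stmt8_absM_isSymm (hABsymm k j (Finset.mem_erase.mp hj).1.symm)).apply a b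
      · simp only [if_neg hkl, if_neg (fun h : l = k => hkl h.symm), Matrix.neg_apply]
        rw [hund l k (fun h : l = k => hkl h.symm)]
        exact congrArg Neg.neg (((hA k l hkl).1).apply a b)
    have h2 : (_root_.blockDiag' fun i => δ i • absM (B i)).IsHermitian := by
      refine Matrix.IsHermitian.ext fun p q => ?_
      obtain ⟨k, a⟩ := p
      obtain ⟨l, b⟩ := q
      simp only [star_trivial, _root_.blockDiag']
      by_cases hkl : k = l
      · subst hkl
        simp only [if_pos rfl, Matrix.smul_apply, smul_eq_mul]
        exact congrArg (δ k * ·) ((stmt8_absM_isSymm (hBsymm k)).apply a b)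
      · simp only [if_neg hkl, if_neg (fun h : l = k => hkl h.symm)]
    exact h1.add h2
  have hPD : (Lap A + _root_.blockDiag' fun i => δ i • absM (B i)).PosDef := by
    refine Matrix.PosDef.of_dotProduct_mulVec_pos herm fun x hx => ?_
    simp only [star_trivial]
    set t : Fin N → Fin N → ℝ := fun i j =>
      (fun a => x (i,a)) ⬝ᵥ absM (A i j) *ᵥ (fun a => x (i,a))
        - (fun a => x (i,a)) ⬝ᵥ (A i j) *ᵥ (fun a => x (j,a)) with ht
    set Dq : Fin N → ℝ := fun i =>
      δ i * ((fun a => x (i,a)) ⬝ᵥ absM (B i) *ᵥ (fun a => x (i,a))) with hDq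
    have hqf : x ⬝ᵥ (Lap A + _root_.blockDiag' fun i => δ i • absM (B i)) *ᵥ x
        = (∑ i : Fin N, ∑ j ∈ Finset.univ.erase i, t i j) + ∑ i : Fin N, Dq i := by
      rw [Matrix.add_mulVec, dotProduct_add]
      congr 1
      · rw [stmt8_lap_decomp A, stmt8_qf_sum]
        refine Finset.sum_congr rfl fun i _ => ?_
        rw [stmt8_qf_sum]
        refine Finset.sum_congr rfl fun j hj => ?_
        rw [Matrix.add_mulVec, dotProduct_add, stmt8_qf_pblk, stmt8_qf_pblk]
        simp only [ht]
        rw [neg_mulVec, dotProduct_neg]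
        ring
      · rw [stmt8_bd_decomp, stmt8_qf_sum]
        refine Finset.sum_congr rfl fun i _ => ?_
        rw [stmt8_qf_pblk]
        simp only [hDq]
        rw [smul_mulVec, dotProduct_smul, smul_eq_mul]
    have hpair_nn : ∀ i : Fin N, ∀ j ∈ Finset.univ.erase i, 0 ≤ t i j + t j i := by
      intro i j hj
      have hji : j ≠ i := (Finset.mem_erase.mp hj).1
      have hij : i ≠ j := Ne.symm hji
      have hswap : A j i = A i j := hund j i hji
      simp only [ht, hswap]
      exact stmt8_pair_nonneg (hA i j hij).2 _ _
    have h2S : (∑ i : Fin N, ∑ j ∈ Finset.univ.erase i, t i j) * 2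
        = ∑ i : Fin N, ∑ j ∈ Finset.univ.erase i, (t i j + t j i) := by
      simp only [Finset.sum_add_distrib]
      rw [← stmt8_swap_sum t]
      ring
    have hpairsum_nn : 0 ≤ ∑ i : Fin N, ∑ j ∈ Finset.univ.erase i, (t i j + t j i) :=
      Finset.sum_nonneg fun i _ => Finset.sum_nonneg fun j hj => hpair_nn i j hj
    have hSnn : 0 ≤ ∑ i : Fin N, ∑ j ∈ Finset.univ.erase i, t i j := by linarith
    have hDnn : ∀ i : Fin N, 0 ≤ Dq i := by
      intro i
      refine mul_nonneg (hδ0 i) ?_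
      simpa [star_trivial] using (stmt8_absM_psd (hBsd i)).dotProduct_mulVec_nonneg (fun a => x (i,a))
    have hDsum_nn : 0 ≤ ∑ i : Fin N, Dq i := Finset.sum_nonneg fun i _ => hDnn i
    rw [hqf]
    refine lt_of_le_of_ne (add_nonneg hSnn hDsum_nn) fun h0 => hx ?_
    have hS0 : ∑ i : Fin N, ∑ j ∈ Finset.univ.erase i, t i j = 0 := by linarith
    have hD0 : ∑ i : Fin N, Dq i = 0 := by linarith
    have hDzero : ∀ i : Fin N, Dq i = 0 := fun i =>
      (Finset.sum_eq_zero_iff_of_nonneg fun i _ => hDnn i).mp hD0 i (Finset.mem_univ i)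
    have hpairsum0 : ∑ i : Fin N, ∑ j ∈ Finset.univ.erase i, (t i j + t j i) = 0 := by
      linarith
    have hpair0 : ∀ i : Fin N, ∀ j ∈ Finset.univ.erase i, t i j + t j i = 0 := by
      intro i j hj
      have houter := (Finset.sum_eq_zero_iff_of_nonneg fun i _ =>
        Finset.sum_nonneg fun j hj => hpair_nn i j hj).mp hpairsum0 i (Finset.mem_univ i)
      exact (Finset.sum_eq_zero_iff_of_nonneg fun j hj => hpair_nn i j hj).mp houter j hj
    have hv1 : ∀ i ∈ V1, (fun a => x (i,a)) = 0 := by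
      intro i hi
      obtain ⟨hBpd, hδpos⟩ := hV1 i hi
      have hDi := hDzero i
      simp only [hDq] at hDi
      rcases mul_eq_zero.mp hDi with h' | h'
      · exact absurd h' (ne_of_gt hδpos)
      · exact stmt8_posdef_qf_eq_zero hBpd h'
    have hedge : ∀ i j : Fin N, ((A j i).PosDef ∨ (-(A j i)).PosDef) →
        (fun a => x (i,a)) = 0 → (fun a => x (j,a)) = 0 := by
      intro i j hdef hzero
      by_cases hji : j = i
      · exact hji ▸ hzero
      · have hswap : A j i = A i j := hund j i hji
        have hp := hpair0 i j (Finset.mem_erase.mpr ⟨hji, Finset.mem_univ j⟩)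
        simp only [ht, hswap] at hp
        rw [hzero] at hp
        simp only [zero_dotProduct, mulVec_zero, dotProduct_zero, sub_zero, zero_sub,
          neg_zero, zero_add] at hp
        rw [hswap] at hdef
        exact stmt8_absM_qf_zero hdef hp
    have hall : ∀ i : Fin N, (fun a => x (i,a)) = 0 := by
      intro i
      have hiuniv : i ∈ V1 ∪ V2 := hAss.1 ▸ Finset.mem_univ i
      rcases Finset.mem_union.mp hiuniv with hi | hi
      · exact hv1 i hi
      · obtain ⟨i0, hi0, m, hm, p, hp0, hpl, hstep⟩ := hAss.2.2 i hi
        have key : ∀ n : ℕ, ∀ hn : n ≤ m,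
            (fun a => x (p ⟨n, Nat.lt_succ_of_le hn⟩, a)) = 0 := by
          intro n
          induction n with
          | zero =>
            intro hn
            have h0 : (⟨0, Nat.lt_succ_of_le hn⟩ : Fin (m+1)) = 0 := rfl
            rw [h0, hp0]
            exact hv1 i0 hi0
          | succ n ih =>
            intro hn
            have hnm : n < m := Nat.lt_of_succ_le hn
            have hprev := ih (Nat.le_of_lt hnm)
            have hstepn := hstep ⟨n, hnm⟩
            have hcast : (Fin.castSucc ⟨n, hnm⟩ : Fin (m+1))
                = ⟨n, Nat.lt_succ_of_le (Nat.le_of_lt hnm)⟩ := rfl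
            have hsucc : (Fin.succ ⟨n, hnm⟩ : Fin (m+1))
                = ⟨n+1, Nat.lt_succ_of_le hn⟩ := rfl
            rw [hcast, hsucc] at hstepn
            exact hedge _ _ hstepn hprev
        have hkeym := key m le_rfl
        have hpi : p ⟨m, Nat.lt_succ_of_le le_rfl⟩ = i := hpl
        rw [hpi] at hkeym
        exact hkeym
    funext pa
    obtain ⟨i, a⟩ := pa
    exact congrFun (hall i) a
  exact ⟨hPD, fun μ hroot => stmt8_eig_real_pos hPD μ hroot⟩
end

section
/- (Corollary 1: non-trivial consensus on undirected signed matrix-weighted networks.) Let A_{ij} be a signed matrix-weight assignment on N vertices with A_{ij} = A_{ji} for all i ≠ j, satisfying Assumption 2 with partition V1 ∪ V2, and suppose Σ_{j∈Ω_i}|A_{ij}| is positive definite for every i ∈ V1, where Ω_i = {j : A_{ij} is negative semidefinite and nonzero}. Let θ ∈ ℝ^d with θ ≠ 0 and let δ > 0 be arbitrary. Apply the design: δ_i = δ for i ∈ U = {i : Ω_i ≠ ∅} and δ_i = 0 otherwise; B_i = Σ_{j∈Ω_i}|A_{ij}| for i ∈ U and B_i = 0 otherwise; x_0 = (1 + 2/δ)θ.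 Let L_B = L + blockdiag(δ_1 B_1,…,δ_N B_N) and let b ∈ ℝ^{Nd} be the vector whose i-th d-dimensional block is δ_i B_i x_0. Then every differentiable function x : [0,∞) → ℝ^{Nd} satisfying x'(t) = −L_B x(t) + b for all t ≥ 0 converges: x(t) → 1_N ⊗ θ as t → ∞. -/
open Matrix Filter
open scoped Classical

/-- Coercivity constant for a positive-definite quadratic form. -/
lemma aux_quad_lower {n : Type*} [Fintype n] [Nonempty n] (M : Matrix n n ℝ)
    (hpos : ∀ v : n → ℝ, v ≠ 0 → 0 < v ⬝ᵥ M *ᵥ v) :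
    ∃ c > 0, ∀ v : n → ℝ, c * (v ⬝ᵥ v) ≤ v ⬝ᵥ M *ᵥ v := by
  classical
  let f : EuclideanSpace ℝ n → ℝ := fun v => (v : n → ℝ) ⬝ᵥ M *ᵥ (v : n → ℝ)
  have hfc : Continuous f := by
    have : Continuous fun v : EuclideanSpace ℝ n => (v : n → ℝ) := by
      exact (PiLp.continuousLinearEquiv 2 ℝ (fun _ : n => ℝ)).continuous
    unfold f
    simp only [dotProduct, Matrix.mulVec]
    exact continuous_finset_sum _ fun i _ => ((continuous_apply i).comp this).mul
      (continuous_finset_sum _ fun j _ => (continuous_const.mul ((continuous_apply j).comp this)))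
  have hsph : (Metric.sphere (0 : EuclideanSpace ℝ n) 1).Nonempty :=
    NormedSpace.sphere_nonempty.mpr zero_le_one
  obtain ⟨v0, hv0, hmin⟩ := (isCompact_sphere (0 : EuclideanSpace ℝ n) 1).exists_isMinOn hsph
    hfc.continuousOn
  have hv0n : ‖v0‖ = 1 := by simpa using hv0
  have hv0ne : v0 ≠ 0 := by
    intro h; rw [h] at hv0n; simp at hv0n
  have hc : 0 < f v0 := hpos v0 (by
    intro h; apply hv0ne; ext i; exact congrFun h i)
  refine ⟨f v0, hc, fun v => ?_⟩
  by_cases hv : v = 0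
  · subst hv; simp
  · set vE : EuclideanSpace ℝ n := WithLp.toLp 2 v
    have hvE : vE ≠ 0 := by
      intro h; apply hv; ext i; exact congrArg (fun w : EuclideanSpace ℝ n => w i) h
    have hnv : (0:ℝ) < ‖vE‖ := norm_pos_iff.mpr hvE
    set u : EuclideanSpace ℝ n := ‖vE‖⁻¹ • vE with hu
    have hun : u ∈ Metric.sphere (0 : EuclideanSpace ℝ n) 1 := by
      simp [hu, norm_smul, abs_of_pos (inv_pos.mpr hnv), inv_mul_cancel₀ hnv.ne']
    have hfu : f v0 ≤ f u := hmin hun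
    have hfu2 : f u = ‖vE‖⁻¹ * ‖vE‖⁻¹ * f vE := by
      unfold f u
      show ((‖vE‖⁻¹ • v : n → ℝ)) ⬝ᵥ M *ᵥ ((‖vE‖⁻¹ • v : n → ℝ)) = _
      rw [smul_dotProduct, Matrix.mulVec_smul, dotProduct_smul]
      simp only [smul_eq_mul]
      ring
    have hdot : v ⬝ᵥ v = ‖vE‖ ^ 2 := by
      have := real_inner_self_eq_norm_sq (x := vE)
      rw [← this]
      simp only [vE, PiLp.inner_apply, dotProduct, RCLike.inner_apply, conj_trivial]
    rw [hdot]
    have : f v0 * ‖vE‖ ^ 2 ≤ (‖vE‖⁻¹ * ‖vE‖⁻¹ * f vE) * ‖vE‖ ^ 2 := by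
      apply mul_le_mul_of_nonneg_right _ (by positivity)
      rw [← hfu2]; exact hfu
    calc f v0 * ‖vE‖ ^ 2 ≤ (‖vE‖⁻¹ * ‖vE‖⁻¹ * f vE) * ‖vE‖ ^ 2 := this
      _ = f vE := by
        have h2 : ‖vE‖ ≠ 0 := hnv.ne'
        field_simp

lemma aux_ode_tendsto {n : Type*} [Fintype n] [Nonempty n] (M : Matrix n n ℝ)
    (hpos : ∀ v : n → ℝ, v ≠ 0 → 0 < v ⬝ᵥ M *ᵥ v)
    (hqb : ∃ c > 0, ∀ v : n → ℝ, c * (v ⬝ᵥ v) ≤ v ⬝ᵥ M *ᵥ v)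
    (b : n → ℝ) (xs : n → ℝ) (hxs : M *ᵥ xs = b)
    (x : ℝ → n → ℝ) (hx : ∀ t : ℝ, 0 ≤ t → HasDerivAt x (-(M *ᵥ (x t)) + b) t) :
    Tendsto x atTop (nhds xs) := by
  classical
  obtain ⟨c, hc, hcb⟩ := hqb
  -- coordinates derivative
  have hcoord : ∀ (p : n) (t : ℝ), 0 ≤ t →
      HasDerivAt (fun s => x s p) ((-(M *ᵥ (x t)) + b) p) t := by
    intro p t ht
    exact (ContinuousLinearMap.proj (R := ℝ) (φ := fun _ : n => ℝ) p).hasFDerivAt.comp_hasDerivAt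
      t (hx t ht)
  set y : ℝ → n → ℝ := fun t p => x t p - xs p with hy
  have hyder : ∀ (p : n) (t : ℝ), 0 ≤ t →
      HasDerivAt (fun s => y s p) (-(M *ᵥ (y t)) p) t := by
    intro p t ht
    have h1 := (hcoord p t ht).sub_const (xs p)
    refine h1.congr_deriv ?_
    have : M *ᵥ (y t) = M *ᵥ (x t) - b := by
      rw [← hxs]
      show M *ᵥ (x t - xs) = _
      rw [Matrix.mulVec_sub]
    rw [this]
    simp only [Pi.neg_apply, Pi.sub_apply, Pi.add_apply]
    ring
  set g : ℝ → ℝ := fun t => ∑ p, (y t p) ^ 2 with hg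
  have hgder : ∀ t : ℝ, 0 ≤ t →
      HasDerivAt g (-2 * ((y t) ⬝ᵥ M *ᵥ (y t))) t := by
    intro t ht
    have h1 : HasDerivAt g (∑ p, (2 * y t p * (-(M *ᵥ (y t)) p))) t := by
      apply HasDerivAt.fun_sum
      intro p _
      have := (hyder p t ht).fun_pow 2
      simpa [mul_comm, mul_assoc, mul_left_comm] using this
    convert h1 using 1
    simp only [dotProduct, Pi.neg_apply, Finset.mul_sum]
    apply Finset.sum_congr rfl
    intro p _
    ring
  set h : ℝ → ℝ := fun t => Real.exp (2 * c * t) * g t with hh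
  have hhder : ∀ t : ℝ, 0 ≤ t →
      HasDerivAt h (Real.exp (2 * c * t) * (2 * c * g t + (-2 * ((y t) ⬝ᵥ M *ᵥ (y t))))) t := by
    intro t ht
    have he : HasDerivAt (fun s => Real.exp (2 * c * s)) (2 * c * Real.exp (2 * c * t)) t := by
      have hin : HasDerivAt (fun s : ℝ => 2 * c * s) (2 * c) t := by
        simpa using (hasDerivAt_id t).const_mul (2 * c)
      have := (Real.hasDerivAt_exp (2 * c * t)).comp t hin
      refine this.congr_deriv ?_
      ring
    have := he.mul (hgder t ht)
    refine this.congr_deriv ?_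
    ring
  have hder_nonpos : ∀ t : ℝ, 0 ≤ t →
      Real.exp (2 * c * t) * (2 * c * g t + (-2 * ((y t) ⬝ᵥ M *ᵥ (y t)))) ≤ 0 := by
    intro t ht
    apply mul_nonpos_of_nonneg_of_nonpos (Real.exp_nonneg _)
    have h1 : c * ((y t) ⬝ᵥ (y t)) ≤ (y t) ⬝ᵥ M *ᵥ (y t) := hcb (y t)
    have h2 : (y t) ⬝ᵥ (y t) = g t := by
      simp [hg, dotProduct, sq]
    nlinarith
  have hanti : AntitoneOn h (Set.Ici (0:ℝ)) := by
    apply antitoneOn_of_deriv_nonpos (convex_Ici 0)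
    · intro t ht
      exact ((hhder t ht).continuousAt).continuousWithinAt
    · intro t ht
      rw [interior_Ici] at ht
      exact ((hhder t (le_of_lt ht)).differentiableAt).differentiableWithinAt
    · intro t ht
      rw [interior_Ici] at ht
      rw [(hhder t (le_of_lt ht)).deriv]
      exact hder_nonpos t (le_of_lt ht)
  have hgbound : ∀ t : ℝ, 0 ≤ t → g t ≤ Real.exp (-(2 * c * t)) * g 0 := by
    intro t ht
    have := hanti (Set.self_mem_Ici) ht ht
    have h0 : h 0 = g 0 := by simp [hh]
    rw [h0] at this
    have hgt : g t = Real.exp (-(2 * c * t)) * h t := by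
      simp [hh, ← mul_assoc, ← Real.exp_add]
    rw [hgt]
    apply mul_le_mul_of_nonneg_left this (Real.exp_nonneg _)
  have hgnonneg : ∀ t : ℝ, 0 ≤ g t := by
    intro t; exact Finset.sum_nonneg fun p _ => sq_nonneg _
  have hexp0 : Tendsto (fun t : ℝ => Real.exp (-(2 * c * t)) * g 0) atTop (nhds 0) := by
    have h1 : Tendsto (fun t : ℝ => -(2 * c * t)) atTop atBot := by
      have : Tendsto (fun t : ℝ => 2 * c * t) atTop atTop :=
        Tendsto.const_mul_atTop (by positivity) tendsto_id
      exact tendsto_neg_atBot_iff.mpr this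
    have := (Real.tendsto_exp_atBot.comp h1).mul_const (g 0)
    simpa using this
  have hg0 : Tendsto g atTop (nhds 0) := by
    apply tendsto_of_tendsto_of_tendsto_of_le_of_le' tendsto_const_nhds hexp0
    · exact Eventually.of_forall hgnonneg
    · filter_upwards [eventually_ge_atTop (0:ℝ)] with t ht using hgbound t ht
  rw [tendsto_pi_nhds]
  intro p
  have hsq : Tendsto (fun t => (y t p) ^ 2) atTop (nhds 0) := by
    apply tendsto_of_tendsto_of_tendsto_of_le_of_le' tendsto_const_nhds hg0
    · exact Eventually.of_forall fun t => sq_nonneg _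
    · exact Eventually.of_forall fun t =>
        Finset.single_le_sum (f := fun p => (y t p)^2) (fun q _ => sq_nonneg _) (Finset.mem_univ p)
  have habs : Tendsto (fun t => |y t p|) atTop (nhds 0) := by
    have h2 := (Real.continuous_sqrt.tendsto 0).comp hsq
    have h3 : (fun t => |y t p|) = (fun r => Real.sqrt r) ∘ (fun t => (y t p) ^ 2) := by
      funext t; simp [Real.sqrt_sq_eq_abs]
    rw [h3]
    simpa using h2
  have hy0 : Tendsto (fun t => y t p) atTop (nhds 0) := by
    apply tendsto_of_tendsto_of_tendsto_of_le_of_le' (by simpa using habs.neg) habs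
    · exact Eventually.of_forall fun t => neg_abs_le _
    · exact Eventually.of_forall fun t => le_abs_self _
  have := hy0.add_const (xs p)
  simpa [hy] using this

lemma aux_psd_nsd_zero {d : ℕ} {Q : Matrix (Fin d) (Fin d) ℝ}
    (h1 : Q.PosSemidef) (h2 : (-Q).PosSemidef) : Q = 0 := by
  have hz : ∀ v : Fin d → ℝ, Q *ᵥ v = 0 := by
    intro v
    have e1 := h1.dotProduct_mulVec_nonneg v
    have e2 := h2.dotProduct_mulVec_nonneg v
    rw [Matrix.neg_mulVec, dotProduct_neg] at e2
    have : star v ⬝ᵥ Q *ᵥ v = 0 := le_antisymm (by linarith) e1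
    exact (h1.dotProduct_mulVec_zero_iff v).mp this
  ext i j
  have := congrFun (hz (Pi.single j 1)) i
  simpa [Matrix.mulVec_single] using this

lemma aux_zero_not_posdef {d : ℕ} (hd : 1 ≤ d) : ¬(0 : Matrix (Fin d) (Fin d) ℝ).PosDef := by
  intro h
  have hne : (Pi.single (⟨0, hd⟩ : Fin d) 1 : Fin d → ℝ) ≠ 0 := by
    intro hcon
    have := congrFun hcon ⟨0, hd⟩
    simp [Pi.single_apply] at this
  have := h.dotProduct_mulVec_pos hne
  simp at this

lemma aux_not_psd {d : ℕ} (hd : 1 ≤ d) {Q : Matrix (Fin d) (Fin d) ℝ}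
    (h : (-Q).PosDef) : ¬Q.PosSemidef := by
  intro hpsd
  have hne : (Pi.single (⟨0, hd⟩ : Fin d) 1 : Fin d → ℝ) ≠ 0 := by
    intro hcon
    have := congrFun hcon ⟨0, hd⟩
    simp [Pi.single_apply] at this
  have e1 := h.dotProduct_mulVec_pos hne
  have e2 := hpsd.dotProduct_mulVec_nonneg (Pi.single (⟨0, hd⟩ : Fin d) 1)
  rw [Matrix.neg_mulVec, dotProduct_neg] at e1
  linarith

lemma aux_absM_psd {d : ℕ} {Q : Matrix (Fin d) (Fin d) ℝ}
    (h : Q.PosSemidef ∨ (-Q).PosSemidef) : (absM Q).PosSemidef := by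
  unfold absM
  split_ifs with hq
  · exact hq
  · rcases h with h | h
    · exact absurd h hq
    · exact h

lemma aux_pd_quad_zero {d : ℕ} {Q : Matrix (Fin d) (Fin d) ℝ} (h : Q.PosDef)
    {z : Fin d → ℝ} (hz : z ⬝ᵥ Q *ᵥ z = 0) : z = 0 := by
  by_contra hne
  have := h.dotProduct_mulVec_pos hne
  rw [show star z = z from rfl] at this
  rw [hz] at this
  exact lt_irrefl 0 this

lemma aux_psd_quad_nonneg {d : ℕ} {Q : Matrix (Fin d) (Fin d) ℝ} (h : Q.PosSemidef)
    (z : Fin d → ℝ) : 0 ≤ z ⬝ᵥ Q *ᵥ z := h.dotProduct_mulVec_nonneg z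

lemma aux_sum_psd {d N : ℕ} {s : Finset (Fin N)} {f : Fin N → Matrix (Fin d) (Fin d) ℝ}
    (h : ∀ i ∈ s, (f i).PosSemidef) : (∑ i ∈ s, f i).PosSemidef := by
  classical
  induction s using Finset.induction_on with
  | empty => simpa using (Matrix.PosSemidef.zero (n := Fin d) (R := ℝ))
  | @insert a s2 hni ih =>
    rw [Finset.sum_insert hni]
    exact (h a (Finset.mem_insert_self a s2)).add (ih fun i hi => h i (Finset.mem_insert_of_mem hi))


lemma aux_sum_mulVec {m n ι : Type*} [Fintype n] (s : Finset ι) (M : ι → Matrix m n ℝ)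
    (w : n → ℝ) : (∑ k ∈ s, M k) *ᵥ w = ∑ k ∈ s, (M k *ᵥ w) := by
  funext a
  simp only [Matrix.mulVec, dotProduct, Finset.sum_apply, Matrix.sum_apply,
    Finset.sum_mul]
  rw [Finset.sum_comm]

lemma aux_dot_sum {n ι : Type*} [Fintype n] (s : Finset ι) (u : n → ℝ) (w : ι → n → ℝ) :
    u ⬝ᵥ (∑ k ∈ s, w k) = ∑ k ∈ s, u ⬝ᵥ w k := by
  simp only [dotProduct, Finset.sum_apply, Finset.mul_sum]
  rw [Finset.sum_comm]

lemma aux_dot_symm {n : Type*} [Fintype n] {Q : Matrix n n ℝ} (h : Q.IsSymm) (u w : n → ℝ) :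
    u ⬝ᵥ Q *ᵥ w = w ⬝ᵥ Q *ᵥ u := by
  rw [Matrix.dotProduct_mulVec]
  rw [show u ᵥ* Q = Q *ᵥ u by conv_lhs => rw [← h]; rw [Matrix.vecMul_transpose]]
  exact dotProduct_comm _ _

lemma aux_quad_blocks {N d : ℕ} (M : Matrix (Fin N × Fin d) (Fin N × Fin d) ℝ)
    (v : Fin N × Fin d → ℝ) :
    v ⬝ᵥ M *ᵥ v = ∑ i : Fin N, ∑ j : Fin N,
      ((fun a => v (i, a)) ⬝ᵥ (Matrix.of fun a b => M (i, a) (j, b)) *ᵥ (fun b => v (j, b))) := by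
  simp only [dotProduct, Matrix.mulVec, Matrix.of_apply, Fintype.sum_prod_type,
    Finset.mul_sum]
  apply Finset.sum_congr rfl
  intro i _
  exact Finset.sum_comm


/-- (Corollary 1: non-trivial consensus on undirected signed
matrix-weighted networks), with arbitrary coupling strength `δ > 0`. -/
theorem stmt9 (N d : ℕ) (hN : 1 ≤ N) (hd : 1 ≤ d)
    (A : Fin N → Fin N → Matrix (Fin d) (Fin d) ℝ) (hA : SignedWeights A)
    (hund : ∀ i j : Fin N, i ≠ j → A i j = A j i)
    (V1 V2 : Finset (Fin N)) (hAss : Assumption2 A V1 V2)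
    (hPD : ∀ i ∈ V1, (∑ j ∈ OmegaSet A i, absM (A i j)).PosDef)
    (θ : Fin d → ℝ) (hθ : θ ≠ 0)
    (δ : ℝ) (hδ : 0 < δ)
    (δi : Fin N → ℝ) (hδi : ∀ i, δi i = if (OmegaSet A i).Nonempty then δ else 0)
    (B : Fin N → Matrix (Fin d) (Fin d) ℝ)
    (hB : ∀ i, B i = ∑ j ∈ OmegaSet A i, absM (A i j))
    (x₀ : Fin d → ℝ) (hx₀ : x₀ = (1 + 2 / δ) • θ)
    (LB : Matrix (Fin N × Fin d) (Fin N × Fin d) ℝ)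
    (hLB : LB = Lap A + blockDiag' fun i => δi i • B i)
    (b : Fin N × Fin d → ℝ) (hb : b = fun p => ((δi p.1 • B p.1).mulVec x₀) p.2) :
    ∀ x : ℝ → (Fin N × Fin d → ℝ),
      (∀ t : ℝ, 0 ≤ t → HasDerivAt x (-(LB.mulVec (x t)) + b) t) →
      Tendsto x atTop (nhds fun p => θ p.2) := by
  classical
  intro x hx
  have hNe : Nonempty (Fin N × Fin d) := ⟨⟨⟨0, hN⟩, ⟨0, hd⟩⟩⟩
  have hOmega_mem : ∀ i j, j ∈ OmegaSet A i → j ≠ i ∧ (-(A i j)).PosSemidef ∧ A i j ≠ 0 := by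
    intro i j hj
    simp only [OmegaSet, Finset.mem_filter, Finset.mem_erase] at hj
    exact ⟨hj.1.1, hj.2.1, hj.2.2⟩
  have hBpsd : ∀ i, (B i).PosSemidef := by
    intro i; rw [hB]
    apply aux_sum_psd
    intro j hj
    exact aux_absM_psd (Or.inr (hOmega_mem i j hj).2.1)
  have hOmV1 : ∀ i ∈ V1, (OmegaSet A i).Nonempty := by
    intro i hi
    by_contra hcon
    rw [Finset.not_nonempty_iff_eq_empty] at hcon
    have h2 := hPD i hi
    rw [hcon, Finset.sum_empty] at h2
    exact aux_zero_not_posdef hd h2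
  have hBPD : ∀ i ∈ V1, (B i).PosDef := by
    intro i hi; rw [hB]; exact hPD i hi
  have hδnn : ∀ i, 0 ≤ δi i := by
    intro i; rw [hδi]; split_ifs
    · exact le_of_lt hδ
    · exact le_rfl
  -- positivity of the quadratic form of LB
  have hpos : ∀ v : Fin N × Fin d → ℝ, v ≠ 0 → 0 < v ⬝ᵥ LB *ᵥ v := by
    intro v hv
    set xb : Fin N → Fin d → ℝ := fun i a => v (i, a) with hxbdef
    have hblock : ∀ i j : Fin N, (Matrix.of fun a b => LB (i, a) (j, b)) =
        if i = j then (∑ k ∈ Finset.univ.erase i, absM (A i k)) + δi i • B i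
        else -(A i j) := by
      intro i j
      split_ifs with hij
      · subst hij
        ext a b
        simp [hLB, Lap, _root_.blockDiag', Matrix.add_apply, Matrix.smul_apply, smul_eq_mul]
      · ext a b
        simp [hLB, Lap, _root_.blockDiag', hij, Matrix.add_apply]
    have hQ : v ⬝ᵥ LB *ᵥ v =
        (∑ i, ∑ j ∈ Finset.univ.erase i,
          (xb i ⬝ᵥ absM (A i j) *ᵥ xb i - xb i ⬝ᵥ (A i j) *ᵥ xb j))
        + ∑ i, δi i * (xb i ⬝ᵥ (B i) *ᵥ xb i) := by
      rw [aux_quad_blocks]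
      have h1 : ∀ i : Fin N,
          (∑ j : Fin N, ((fun a => v (i, a)) ⬝ᵥ (Matrix.of fun a b => LB (i, a) (j, b)) *ᵥ
            (fun b => v (j, b))))
          = ((∑ k ∈ Finset.univ.erase i, (xb i ⬝ᵥ absM (A i k) *ᵥ xb i))
            + δi i * (xb i ⬝ᵥ (B i) *ᵥ xb i))
            + ∑ j ∈ Finset.univ.erase i, -(xb i ⬝ᵥ (A i j) *ᵥ xb j) := by
        intro i
        rw [← Finset.add_sum_erase _ _ (Finset.mem_univ i)]
        congr 1
        · rw [hblock i i, if_pos rfl]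
          show xb i ⬝ᵥ ((∑ k ∈ Finset.univ.erase i, absM (A i k)) + δi i • B i) *ᵥ xb i = _
          rw [Matrix.add_mulVec, dotProduct_add, aux_sum_mulVec, aux_dot_sum,
            Matrix.smul_mulVec, dotProduct_smul, smul_eq_mul]
        · apply Finset.sum_congr rfl
          intro j hj
          rw [hblock i j, if_neg (Ne.symm (Finset.mem_erase.mp hj).1)]
          show xb i ⬝ᵥ (-(A i j)) *ᵥ xb j = _
          rw [Matrix.neg_mulVec, dotProduct_neg]
      simp only [h1]
      rw [Finset.sum_add_distrib, Finset.sum_add_distrib]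
      simp only [Finset.sum_neg_distrib]
      have hsplit : (∑ i, ∑ j ∈ Finset.univ.erase i,
          (xb i ⬝ᵥ absM (A i j) *ᵥ xb i - xb i ⬝ᵥ (A i j) *ᵥ xb j))
          = (∑ i, ∑ j ∈ Finset.univ.erase i, xb i ⬝ᵥ absM (A i j) *ᵥ xb i)
            - (∑ i, ∑ j ∈ Finset.univ.erase i, xb i ⬝ᵥ (A i j) *ᵥ xb j) := by
        rw [← Finset.sum_sub_distrib]
        exact Finset.sum_congr rfl fun i _ => Finset.sum_sub_distrib _ _
      rw [hsplit]
      ring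
    have hTE : ∀ i j : Fin N, j ≠ i →
        (xb i ⬝ᵥ absM (A i j) *ᵥ xb i - xb i ⬝ᵥ (A i j) *ᵥ xb j)
        + (xb j ⬝ᵥ absM (A j i) *ᵥ xb j - xb j ⬝ᵥ (A j i) *ᵥ xb i)
        = (xb i - (if (A i j).PosSemidef then (1:ℝ) else -1) • xb j) ⬝ᵥ
            absM (A i j) *ᵥ (xb i - (if (A i j).PosSemidef then (1:ℝ) else -1) • xb j) := by
      intro i j hji
      have hij : i ≠ j := Ne.symm hji
      have hAji : A j i = A i j := (hund i j hij).symm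
      have hsymm := (hA i j hij).1
      have habs_symm : (absM (A i j)).IsSymm := by
        unfold absM
        split_ifs
        · exact hsymm
        · exact hsymm.neg
      set s : ℝ := if (A i j).PosSemidef then (1:ℝ) else -1 with hs
      have hss : s * s = 1 := by rw [hs]; split_ifs <;> norm_num
      have hsabs : s • absM (A i j) = A i j := by
        rw [hs]; unfold absM; split_ifs <;> simp
      have hsp : ∀ u w, s * (u ⬝ᵥ absM (A i j) *ᵥ w) = u ⬝ᵥ (A i j) *ᵥ w := by
        intro u w
        conv_rhs => rw [← hsabs]
        rw [Matrix.smul_mulVec, dotProduct_smul, smul_eq_mul]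
      rw [hAji]
      simp only [Matrix.mulVec_sub, sub_dotProduct, dotProduct_sub,
        smul_dotProduct, dotProduct_smul, Matrix.smul_mulVec,
        Matrix.mulVec_smul, smul_eq_mul]
      have e1 : xb j ⬝ᵥ absM (A i j) *ᵥ xb i = xb i ⬝ᵥ absM (A i j) *ᵥ xb j :=
        aux_dot_symm habs_symm _ _
      have e2 : xb j ⬝ᵥ (A i j) *ᵥ xb i = xb i ⬝ᵥ (A i j) *ᵥ xb j := aux_dot_symm hsymm _ _
      have e3 := hsp (xb i) (xb j)
      have e4 : s * (s * (xb j ⬝ᵥ absM (A i j) *ᵥ xb j)) = xb j ⬝ᵥ absM (A i j) *ᵥ xb j := by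
        rw [← mul_assoc, hss, one_mul]
      have e5 := hsp (xb j) (xb i)
      nlinarith [e1, e2, e3, e4, e5]
    set S := ∑ i, ∑ j ∈ Finset.univ.erase i,
      (xb i ⬝ᵥ absM (A i j) *ᵥ xb i - xb i ⬝ᵥ (A i j) *ᵥ xb j) with hS
    have hswap : (∑ i, ∑ j ∈ Finset.univ.erase i,
        (xb j ⬝ᵥ absM (A j i) *ᵥ xb j - xb j ⬝ᵥ (A j i) *ᵥ xb i)) = S := by
      rw [hS]
      apply Finset.sum_comm'
      intro a b
      simp only [Finset.mem_univ, Finset.mem_erase, true_and, and_true]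
      exact ne_comm
    have h2S : S + S = ∑ i, ∑ j ∈ Finset.univ.erase i,
        ((xb i - (if (A i j).PosSemidef then (1:ℝ) else -1) • xb j) ⬝ᵥ
          absM (A i j) *ᵥ (xb i - (if (A i j).PosSemidef then (1:ℝ) else -1) • xb j)) := by
      nth_rewrite 2 [← hswap]
      rw [hS, ← Finset.sum_add_distrib]
      apply Finset.sum_congr rfl
      intro i _
      rw [← Finset.sum_add_distrib]
      apply Finset.sum_congr rfl
      intro j hj
      exact hTE i j (Finset.mem_erase.mp hj).1
    have hEnn : ∀ i j : Fin N, j ≠ i → 0 ≤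
        ((xb i - (if (A i j).PosSemidef then (1:ℝ) else -1) • xb j) ⬝ᵥ
          absM (A i j) *ᵥ (xb i - (if (A i j).PosSemidef then (1:ℝ) else -1) • xb j)) := by
      intro i j hji
      exact aux_psd_quad_nonneg (aux_absM_psd (hA i j (Ne.symm hji)).2) _
    have hDnn : ∀ i, 0 ≤ δi i * (xb i ⬝ᵥ (B i) *ᵥ xb i) := by
      intro i
      exact mul_nonneg (hδnn i) (aux_psd_quad_nonneg (hBpsd i) _)
    have hSnn : 0 ≤ S := by
      have h3 : (0:ℝ) ≤ ∑ i, ∑ j ∈ Finset.univ.erase i,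
          ((xb i - (if (A i j).PosSemidef then (1:ℝ) else -1) • xb j) ⬝ᵥ
            absM (A i j) *ᵥ (xb i - (if (A i j).PosSemidef then (1:ℝ) else -1) • xb j)) :=
        Finset.sum_nonneg fun i _ =>
          Finset.sum_nonneg fun j hj => hEnn i j (Finset.mem_erase.mp hj).1
      rw [← h2S] at h3
      linarith
    have hQnn : 0 ≤ v ⬝ᵥ LB *ᵥ v := by
      rw [hQ]
      exact add_nonneg hSnn (Finset.sum_nonneg fun i _ => hDnn i)
    rcases hQnn.lt_or_eq with h | h
    · exact h
    exfalso
    have hz : S + (∑ i, δi i * (xb i ⬝ᵥ (B i) *ᵥ xb i)) = 0 := by rw [← hQ, ← h]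
    have hDz : (∑ i, δi i * (xb i ⬝ᵥ (B i) *ᵥ xb i)) = 0 := by
      have := Finset.sum_nonneg (fun i (_ : i ∈ Finset.univ) => hDnn i)
      linarith
    have hSz : S = 0 := by linarith
    have hD0 : ∀ i, δi i * (xb i ⬝ᵥ (B i) *ᵥ xb i) = 0 := by
      intro i
      exact (Finset.sum_eq_zero_iff_of_nonneg (fun i _ => hDnn i)).mp hDz i (Finset.mem_univ i)
    have hE0 : ∀ i j : Fin N, j ≠ i →
        ((xb i - (if (A i j).PosSemidef then (1:ℝ) else -1) • xb j) ⬝ᵥ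
          absM (A i j) *ᵥ (xb i - (if (A i j).PosSemidef then (1:ℝ) else -1) • xb j)) = 0 := by
      have hsum0 : (∑ i, ∑ j ∈ Finset.univ.erase i,
          ((xb i - (if (A i j).PosSemidef then (1:ℝ) else -1) • xb j) ⬝ᵥ
            absM (A i j) *ᵥ (xb i - (if (A i j).PosSemidef then (1:ℝ) else -1) • xb j))) = 0 := by
        rw [← h2S, hSz]; ring
      intro i j hji
      have houter := (Finset.sum_eq_zero_iff_of_nonneg (fun i _ =>
        Finset.sum_nonneg (fun j hj => hEnn i j (Finset.mem_erase.mp hj).1))).mp hsum0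
        i (Finset.mem_univ i)
      exact (Finset.sum_eq_zero_iff_of_nonneg (fun j hj =>
        hEnn i j (Finset.mem_erase.mp hj).1)).mp houter j
        (Finset.mem_erase.mpr ⟨hji, Finset.mem_univ j⟩)
    have hV1z : ∀ i ∈ V1, xb i = 0 := by
      intro i hi
      have hδip : δi i = δ := by rw [hδi, if_pos (hOmV1 i hi)]
      have hq : xb i ⬝ᵥ (B i) *ᵥ xb i = 0 := by
        have h3 := hD0 i
        rw [hδip] at h3
        exact (mul_eq_zero.mp h3).resolve_left hδ.ne'
      exact aux_pd_quad_zero (hBPD i hi) hq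
    have hprop : ∀ a b2 : Fin N, ((A b2 a).PosDef ∨ (-(A b2 a)).PosDef) →
        xb a = 0 → xb b2 = 0 := by
      intro a b2 hdef ha
      by_cases hab : b2 = a
      · rw [hab]; exact ha
      · have hE := hE0 b2 a (fun hc => hab hc.symm)
        rw [ha, smul_zero, sub_zero] at hE
        have habsPD : (absM (A b2 a)).PosDef := by
          unfold absM
          split_ifs with hps
          · rcases hdef with h3 | h3
            · exact h3
            · exact absurd hps (aux_not_psd hd h3)
          · rcases hdef with h3 | h3
            · exact absurd h3.posSemidef hps
            · exact h3
        exact aux_pd_quad_zero habsPD hE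
    have hallz : ∀ j : Fin N, xb j = 0 := by
      intro j
      have hjmem : j ∈ V1 ∪ V2 := by rw [hAss.1]; exact Finset.mem_univ j
      rcases Finset.mem_union.mp hjmem with hj | hj
      · exact hV1z j hj
      · obtain ⟨i0, hi0, m, hm, p, hp0, hpl, hstep⟩ := hAss.2.2 j hj
        have hpath : ∀ s2 : Fin (m + 1), xb (p s2) = 0 := by
          intro s2
          induction s2 using Fin.induction with
          | zero => rw [hp0]; exact hV1z i0 hi0
          | succ s2 ih => exact hprop (p s2.castSucc) (p s2.succ) (hstep s2) ih
        rw [← hpl]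
        exact hpath (Fin.last m)
    apply hv
    funext q
    have hq := congrFun (hallz q.1) q.2
    simpa using hq
  -- fixed point: LB *ᵥ (1 ⊗ θ) = b
  have key : ∀ i : Fin N,
      ∑ k ∈ Finset.univ.erase i, (absM (A i k) - A i k) = (2:ℝ) • B i := by
    intro i
    have hsub : OmegaSet A i ⊆ Finset.univ.erase i := Finset.filter_subset _ _
    have hzero : ∀ k ∈ Finset.univ.erase i, k ∉ OmegaSet A i →
        absM (A i k) - A i k = 0 := by
      intro k hk hnk
      by_cases hps : (A i k).PosSemidef
      · unfold absM; rw [if_pos hps, sub_self]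
      · have hik : i ≠ k := Ne.symm (Finset.mem_erase.mp hk).1
        have hnsd := ((hA i k hik).2).resolve_left hps
        have hAz : A i k = 0 := by
          by_contra hAz
          apply hnk
          simp only [OmegaSet, Finset.mem_filter]
          exact ⟨hk, hnsd, hAz⟩
        rw [hAz]
        unfold absM
        rw [if_pos Matrix.PosSemidef.zero, sub_self]
    rw [← Finset.sum_subset hsub hzero, hB, Finset.smul_sum]
    apply Finset.sum_congr rfl
    intro k hk
    obtain ⟨hki, hnsd, hnz⟩ := hOmega_mem i k hk
    have hnps : ¬(A i k).PosSemidef := fun hps => hnz (aux_psd_nsd_zero hps hnsd)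
    unfold absM
    rw [if_neg hnps]
    ext a b2
    simp only [Matrix.sub_apply, Matrix.neg_apply, Matrix.smul_apply, smul_eq_mul]
    ring
  have hfix : LB *ᵥ (fun p : Fin N × Fin d => θ p.2) = b := by
    funext q
    obtain ⟨i, a⟩ := q
    have hexp : (LB *ᵥ fun p : Fin N × Fin d => θ p.2) (i, a)
        = ((∑ k ∈ Finset.univ.erase i, absM (A i k)) *ᵥ θ) a + δi i * ((B i) *ᵥ θ) a
          + ∑ j ∈ Finset.univ.erase i, -(((A i j) *ᵥ θ) a) := by
      show (∑ q : Fin N × Fin d, LB (i, a) q * θ q.2) = _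
      rw [Fintype.sum_prod_type]
      rw [← Finset.add_sum_erase _ _ (Finset.mem_univ i)]
      congr 1
      · -- diagonal block
        have hdiag : ∀ b : Fin d, LB (i, a) (i, b)
            = (∑ k ∈ Finset.univ.erase i, absM (A i k)) a b + δi i * B i a b := by
          intro b
          simp [hLB, Lap, _root_.blockDiag', Matrix.add_apply, Matrix.smul_apply, smul_eq_mul]
        simp only [hdiag]
        show ∑ b : Fin d, ((∑ k ∈ Finset.univ.erase i, absM (A i k)) a b
          + δi i * B i a b) * θ b = _
        rw [Finset.sum_congr rfl (fun b _ => add_mul _ _ _), Finset.sum_add_distrib]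
        congr 1
        show _ = δi i * ∑ b2 : Fin d, B i a b2 * θ b2
        rw [Finset.mul_sum]
        apply Finset.sum_congr rfl
        intro b _
        ring
      · apply Finset.sum_congr rfl
        intro j hj
        have hji : j ≠ i := (Finset.mem_erase.mp hj).1
        have hod : ∀ b : Fin d, LB (i, a) (j, b) = -(A i j a b) := by
          intro b
          simp [hLB, Lap, _root_.blockDiag', Matrix.add_apply, Ne.symm hji]
        simp only [hod]
        show ∑ b : Fin d, -(A i j a b) * θ b = -(∑ b : Fin d, A i j a b * θ b)
        rw [← Finset.sum_neg_distrib]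
        apply Finset.sum_congr rfl
        intro b _
        ring
    rw [hexp]
    have hcomb : ((∑ k ∈ Finset.univ.erase i, absM (A i k)) *ᵥ θ) a
        + ∑ j ∈ Finset.univ.erase i, -(((A i j) *ᵥ θ) a)
        = 2 * ((B i) *ᵥ θ) a := by
      have e1 : (∑ k ∈ Finset.univ.erase i, (absM (A i k) - A i k))
          = (∑ k ∈ Finset.univ.erase i, absM (A i k))
            - (∑ k ∈ Finset.univ.erase i, A i k) := Finset.sum_sub_distrib _ _
      have h4 : 2 * ((B i) *ᵥ θ) a = (((2:ℝ) • B i) *ᵥ θ) a := by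
        rw [Matrix.smul_mulVec]; rfl
      rw [h4, ← key i, e1, Matrix.sub_mulVec, Pi.sub_apply,
        aux_sum_mulVec (Finset.univ.erase i) (fun k => A i k) θ, sub_eq_add_neg]
      congr 1
      rw [Finset.sum_apply]
      exact Finset.sum_neg_distrib _
    have hbv : b (i, a) = δi i * ((1 + 2 / δ) * ((B i) *ᵥ θ) a) := by
      rw [hb]
      show ((δi i • B i) *ᵥ x₀) a = _
      rw [hx₀, Matrix.smul_mulVec, Matrix.mulVec_smul]
      simp only [Pi.smul_apply, smul_eq_mul]
    rw [hbv]
    have : ((∑ k ∈ Finset.univ.erase i, absM (A i k)) *ᵥ θ) a + δi i * ((B i) *ᵥ θ) a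
        + ∑ j ∈ Finset.univ.erase i, -(((A i j) *ᵥ θ) a)
        = 2 * ((B i) *ᵥ θ) a + δi i * ((B i) *ᵥ θ) a := by
      rw [← hcomb]; ring
    rw [this]
    by_cases hΩ : (OmegaSet A i).Nonempty
    · rw [hδi, if_pos hΩ]
      field_simp
      ring
    · have hΩe : OmegaSet A i = ∅ := Finset.not_nonempty_iff_eq_empty.mp hΩ
      have hBz : B i = 0 := by rw [hB, hΩe, Finset.sum_empty]
      rw [hδi, if_neg hΩ, hBz]
      simp
  exact aux_ode_tendsto LB hpos (aux_quad_lower LB hpos) b _ hfix x hx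
end

section
/- (Lemma 4: limit of a converging switched linear system lies in the kernels asymptotically.) Let L_1,…,L_M ∈ ℝ^{n×n} be finitely many real matrices, let α > 0, let (t_k)_{k≥0} be a strictly increasing sequence with t_0 = 0, t_{k+1} − t_k ≥ α for all k, and t_k → ∞, and let σ : ℕ → {1,…,M}. Given z_0 ∈ ℝ^n, define z : [0,∞) → ℝ^n by z(t) = exp(−(t − t_k) L_{σ(k)}) · exp(−(t_k − t_{k−1}) L_{σ(k−1)}) ⋯ exp(−(t_1 − t_0) L_{σ(0)}) z_0 for t ∈ [t_k, t_{k+1}). If z(t) → z* ∈ ℝ^n as t → ∞, then L_{σ(k(t))} z* → 0 as t → ∞, where for each t ≥ 0, k(t) is the unique index k with t ∈ [t_k, t_{k+1}). -/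
open Matrix Filter

/-- The product `exp(−Δt_{k−1} L_{σ(k−1)}) ⋯ exp(−Δt_0 L_{σ(0)})` of the flows of the
switched linear system up to switching instant `t_k` (with `Δt_j = t_{j+1} − t_j`). -/
noncomputable def switchProd {n M : ℕ} (L : Fin M → Matrix (Fin n) (Fin n) ℝ)
    (σ : ℕ → Fin M) (tk : ℕ → ℝ) : ℕ → Matrix (Fin n) (Fin n) ℝ
  | 0 => 1
  | k + 1 => NormedSpace.exp (-((tk (k + 1) - tk k) • L (σ k))) * switchProd L σ tk k

attribute [local instance] Matrix.linftyOpNormedAddCommGroup Matrix.linftyOpNormedRing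
  Matrix.linftyOpNormedAlgebra

/-- Lemma 4: if the converging switched linear system
`z(t) = exp(−(t − t_k)L_{σ(k)}) ⋯ exp(−(t_1 − t_0)L_{σ(0)}) z_0` (for `t ∈ [t_k, t_{k+1})`)
tends to `z*`, then `L_{σ(k(t))} z* → 0` as `t → ∞`. -/
theorem stmt11 (n M : ℕ) (L : Fin M → Matrix (Fin n) (Fin n) ℝ)
    (α : ℝ) (hα : 0 < α)
    (tk : ℕ → ℝ) (htk0 : tk 0 = 0) (hmono : StrictMono tk)
    (hgap : ∀ k, α ≤ tk (k + 1) - tk k) (htop : Tendsto tk atTop atTop)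
    (σ : ℕ → Fin M) (z₀ : Fin n → ℝ)
    (K : ℝ → ℕ) (hK : ∀ t : ℝ, 0 ≤ t → tk (K t) ≤ t ∧ t < tk (K t + 1))
    (z : ℝ → Fin n → ℝ)
    (hz : ∀ t : ℝ, 0 ≤ t →
      z t = (NormedSpace.exp (-((t - tk (K t)) • L (σ (K t)))) *
        switchProd L σ tk (K t)).mulVec z₀)
    (zstar : Fin n → ℝ) (hconv : Tendsto z atTop (nhds zstar)) :
    Tendsto (fun t : ℝ => (L (σ (K t))).mulVec zstar) atTop (nhds 0) := by
  have htknn : ∀ k, 0 ≤ tk k := fun k => htk0 ▸ hmono.monotone (Nat.zero_le k)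
  have hKval : ∀ (k : ℕ) (t : ℝ), tk k ≤ t → t < tk (k + 1) → K t = k := by
    intro k t h1 h2
    have ht0 : 0 ≤ t := le_trans (htknn k) h1
    obtain ⟨hKle, hKlt⟩ := hK t ht0
    by_contra hne
    rcases lt_or_gt_of_ne hne with h | h
    · exact absurd (le_trans (hmono.monotone (Nat.succ_le_of_lt h)) h1) (not_le.2 hKlt)
    · exact absurd (le_trans (hmono.monotone (Nat.succ_le_of_lt h)) hKle) (not_le.2 h2)
  have hzk : ∀ k, z (tk k) = (switchProd L σ tk k).mulVec z₀ := by
    intro k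
    have hKk := hKval k (tk k) le_rfl (hmono (Nat.lt_succ_self k))
    rw [hz (tk k) (htknn k), hKk, sub_self, zero_smul, neg_zero, NormedSpace.exp_zero, one_mul]
  have hzks : ∀ k, ∀ s ∈ Set.Ico (0 : ℝ) α,
      z (tk k + s) = (NormedSpace.exp (-(s • L (σ k)))).mulVec (z (tk k)) := by
    intro k s hs
    obtain ⟨hs0, hsα⟩ := hs
    have hup : tk k + s < tk (k + 1) := by have := hgap k; linarith
    have hlo : tk k ≤ tk k + s := by linarith
    have hKk := hKval k _ hlo hup
    rw [hz _ (le_trans (htknn k) hlo), hKk, hzk k, add_sub_cancel_left,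
      Matrix.mulVec_mulVec]
  have hKtop : Tendsto K atTop atTop := by
    rw [tendsto_atTop_atTop]
    intro N
    refine ⟨max (tk N) 0, fun t ht => ?_⟩
    have ht0 : 0 ≤ t := le_trans (le_max_right _ _) ht
    have h2 := (hK t ht0).2
    by_contra h
    push_neg at h
    have : tk (K t + 1) ≤ tk N := hmono.monotone h
    have : tk (K t + 1) ≤ t := le_trans this (le_trans (le_max_left _ _) ht)
    linarith
  have hfix : ∀ i : Fin M, (∃ᶠ k in atTop, σ k = i) →
      ∀ s ∈ Set.Ico (0 : ℝ) α, (NormedSpace.exp (-(s • L i))).mulVec zstar = zstar := by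
    intro i hfreq s hs
    obtain ⟨φ, hφ, hφi⟩ := Filter.extraction_of_frequently_atTop hfreq
    have htφ : Tendsto (fun m => tk (φ m)) atTop atTop := htop.comp hφ.tendsto_atTop
    have h1 : Tendsto (fun m => z (tk (φ m))) atTop (nhds zstar) := hconv.comp htφ
    have h2 : Tendsto (fun m => z (tk (φ m) + s)) atTop (nhds zstar) :=
      hconv.comp (tendsto_atTop_add_const_right _ s htφ)
    have hc : Continuous fun v : Fin n → ℝ => (NormedSpace.exp (-(s • L i))).mulVec v :=
      LinearMap.continuous_of_finiteDimensional
        ((NormedSpace.exp (-(s • L i))).mulVecLin)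
    have h3 : Tendsto (fun m => (NormedSpace.exp (-(s • L i))).mulVec (z (tk (φ m))))
        atTop (nhds ((NormedSpace.exp (-(s • L i))).mulVec zstar)) :=
      (hc.tendsto _).comp h1
    have h3' : Tendsto (fun m => z (tk (φ m) + s)) atTop
        (nhds ((NormedSpace.exp (-(s • L i))).mulVec zstar)) := by
      refine h3.congr fun m => ?_
      rw [hzks (φ m) s hs, hφi m]
    exact tendsto_nhds_unique h3' h2
  have hzero : ∀ i : Fin M, (∃ᶠ k in atTop, σ k = i) → (L i).mulVec zstar = 0 := by
    intro i hfreq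
    set B : Matrix (Fin n) (Fin n) ℝ := -(L i) with hB
    have key : ∀ s ∈ Set.Ico (0 : ℝ) α,
        (NormedSpace.exp (s • B)).mulVec zstar = zstar := by
      intro s hs
      have h := hfix i hfreq s hs
      rwa [← smul_neg, ← hB] at h
    let T : Matrix (Fin n) (Fin n) ℝ →ₗ[ℝ] (Fin n → ℝ) :=
      { toFun := fun A => A.mulVec zstar
        map_add' := fun A B => Matrix.add_mulVec A B zstar
        map_smul' := fun c A => Matrix.smul_mulVec c A zstar }
    let Tc : Matrix (Fin n) (Fin n) ℝ →L[ℝ] (Fin n → ℝ) := LinearMap.toContinuousLinearMap T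
    have hd : HasDerivAt (fun s : ℝ => Tc (NormedSpace.exp (s • B)))
        (Tc (B * NormedSpace.exp ((α / 2) • B))) (α / 2) :=
      Tc.hasFDerivAt.comp_hasDerivAt (α / 2) (hasDerivAt_exp_smul_const' B (α / 2))
    have hconst : HasDerivAt (fun s : ℝ => Tc (NormedSpace.exp (s • B))) 0 (α / 2) := by
      refine (hasDerivAt_const (α / 2) zstar).congr_of_eventuallyEq ?_
      have hmem : Set.Ioo (0 : ℝ) α ∈ nhds (α / 2) :=
        isOpen_Ioo.mem_nhds ⟨by linarith, by linarith⟩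
      filter_upwards [hmem] with s hs
      exact key s ⟨hs.1.le, hs.2⟩
    have h0 : (0 : Fin n → ℝ) = Tc (B * NormedSpace.exp ((α / 2) • B)) := hconst.unique hd
    have h0' : (B * NormedSpace.exp ((α / 2) • B)).mulVec zstar = 0 := h0.symm
    rw [← Matrix.mulVec_mulVec, key (α / 2) ⟨by linarith, by linarith⟩] at h0'
    rw [hB, Matrix.neg_mulVec] at h0'
    exact neg_eq_zero.mp h0'
  have hev : ∀ᶠ k in atTop, (L (σ k)).mulVec zstar = 0 := by
    have hall : ∀ i : Fin M, ∀ᶠ k in atTop, σ k = i → (L i).mulVec zstar = 0 := by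
      intro i
      by_cases h : ∃ᶠ k in atTop, σ k = i
      · exact Eventually.of_forall fun k _ => hzero i h
      · rw [not_frequently] at h
        filter_upwards [h] with k hk h'
        exact absurd h' hk
    filter_upwards [Filter.eventually_all.mpr hall] with k hk
    exact hk (σ k) rfl
  have hevt : ∀ᶠ t : ℝ in atTop, (L (σ (K t))).mulVec zstar = 0 := hKtop.eventually hev
  exact Tendsto.congr' (hevt.mono fun t ht => ht.symm) tendsto_const_nhds
end

section
/- (Theorem 3: necessary condition for convergence under switching.) Let L_1,…,L_M ∈ ℝ^{n×n} be finitely many real matrices, let α > 0, let (t_k)_{k≥0} be strictly increasing with t_0 = 0, t_{k+1} − t_k ≥ α, t_k → ∞, and let σ : ℕ → {1,…,M}. Given z_0 ∈ ℝ^n, define z : [0,∞) → ℝ^n by z(t) = exp(−(t − t_k) L_{σ(k)}) · exp(−(t_k − t_{k−1}) L_{σ(k−1)}) ⋯ exp(−(t_1 − t_0) L_{σ(0)}) z_0 for t ∈ [t_k, t_{k+1}). Suppose z(t) → z* as t → ∞. Then for every index m ∈ {1,…,M} such that σ(k) = m for infinitely many k, one has L_m z* = 0; consequently z* lies in the intersection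 of the null spaces of all matrices L_m whose index occurs infinitely often in σ. -/
open Matrix Filter

noncomputable def mulVecRight (n : ℕ) (v : Fin n → ℝ) :
    Matrix (Fin n) (Fin n) ℝ →ₗ[ℝ] (Fin n → ℝ) where
  toFun X := X.mulVec v
  map_add' X Y := Matrix.add_mulVec X Y v
  map_smul' c X := Matrix.smul_mulVec c X v

lemma key_deriv (n : ℕ) (A : Matrix (Fin n) (Fin n) ℝ) (v : Fin n → ℝ) :
    HasDerivAt (fun s : ℝ => (NormedSpace.exp (s • A)).mulVec v) (A.mulVec v) 0 := by
  letI : SeminormedRing (Matrix (Fin n) (Fin n) ℝ) := Matrix.linftyOpSemiNormedRing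
  letI : NormedRing (Matrix (Fin n) (Fin n) ℝ) := Matrix.linftyOpNormedRing
  letI : NormedAlgebra ℝ (Matrix (Fin n) (Fin n) ℝ) := Matrix.linftyOpNormedAlgebra
  have h := hasDerivAt_exp_smul_const (𝕂 := ℝ) A (0 : ℝ)
  have h2 := ((mulVecRight n v).toContinuousLinearMap.hasFDerivAt).comp_hasDerivAt 0 h
  simp [mulVecRight, NormedSpace.exp_zero, Function.comp_def] at h2
  exact h2

/-- Theorem 3: necessary condition for convergence under switching:
if the switched solution converges to `z*`, then `L_m z* = 0` for every index `m`
occurring infinitely often in `σ`; hence `z*` lies in the intersection of the null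
spaces of all such `L_m`. -/
theorem stmt12 (n M : ℕ) (L : Fin M → Matrix (Fin n) (Fin n) ℝ)
    (α : ℝ) (hα : 0 < α)
    (tk : ℕ → ℝ) (htk0 : tk 0 = 0) (hmono : StrictMono tk)
    (hgap : ∀ k, α ≤ tk (k + 1) - tk k) (htop : Tendsto tk atTop atTop)
    (σ : ℕ → Fin M) (z₀ : Fin n → ℝ)
    (K : ℝ → ℕ) (hK : ∀ t : ℝ, 0 ≤ t → tk (K t) ≤ t ∧ t < tk (K t + 1))
    (z : ℝ → Fin n → ℝ)
    (hz : ∀ t : ℝ, 0 ≤ t →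
      z t = (NormedSpace.exp (-((t - tk (K t)) • L (σ (K t)))) *
        switchProd L σ tk (K t)).mulVec z₀)
    (zstar : Fin n → ℝ) (hconv : Tendsto z atTop (nhds zstar)) :
    (∀ m : Fin M, {k : ℕ | σ k = m}.Infinite → (L m).mulVec zstar = 0) ∧
    zstar ∈ ⋂ m ∈ {m : Fin M | {k : ℕ | σ k = m}.Infinite},
      {v : Fin n → ℝ | (L m).mulVec v = 0} := by
  have htk_nonneg : ∀ k, 0 ≤ tk k := fun k => htk0 ▸ hmono.monotone (Nat.zero_le k)
  have hKeq : ∀ (k : ℕ) (t : ℝ), tk k ≤ t → t < tk (k + 1) → K t = k := by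
    intro k t h1 h2
    have ht0 : 0 ≤ t := le_trans (htk_nonneg k) h1
    obtain ⟨ha, hb⟩ := hK t ht0
    rcases lt_trichotomy (K t) k with h | h | h
    · exact absurd (lt_of_lt_of_le hb (le_trans (hmono.monotone (Nat.succ_le_of_lt h)) h1))
        (lt_irrefl t)
    · exact h
    · exact absurd (lt_of_lt_of_le h2 (le_trans (hmono.monotone (Nat.succ_le_of_lt h)) ha))
        (lt_irrefl t)
  have hzk : ∀ k, z (tk k) = (switchProd L σ tk k).mulVec z₀ := by
    intro k
    have hKk : K (tk k) = k := hKeq k (tk k) le_rfl (hmono (Nat.lt_succ_self k))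
    rw [hz (tk k) (htk_nonneg k), hKk]
    simp [NormedSpace.exp_zero]
  have key : ∀ m : Fin M, {k : ℕ | σ k = m}.Infinite → (L m).mulVec zstar = 0 := by
    intro m hm
    set f : ℝ → Fin n → ℝ := fun s => (NormedSpace.exp (s • (-L m))).mulVec zstar with hf
    have hfix : ∀ s : ℝ, 0 ≤ s → s < α → f s = zstar := by
      intro s hs0 hsα
      set l : Filter ℕ := atTop ⊓ 𝓟 {k : ℕ | σ k = m} with hl
      have hfreq : ∃ᶠ k in atTop, k ∈ {k : ℕ | σ k = m} :=
        Nat.frequently_atTop_iff_infinite.mpr hm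
      have hne : l.NeBot := Filter.frequently_iff_neBot.mp hfreq
      have h1 : Tendsto (fun k => z (tk k)) l (nhds zstar) :=
        (hconv.comp htop).mono_left inf_le_left
      have htop' : Tendsto (fun k => tk k + s) atTop atTop :=
        tendsto_atTop_add_const_right atTop s htop
      have h2 : Tendsto (fun k => z (tk k + s)) l (nhds zstar) :=
        (hconv.comp htop').mono_left inf_le_left
      set A : Matrix (Fin n) (Fin n) ℝ := NormedSpace.exp (s • (-L m)) with hA
      have hcont : Continuous fun v : Fin n → ℝ => A.mulVec v := by
        have := (mulVecLin A).continuous_of_finiteDimensional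
        exact this
      have h3 : Tendsto (fun k => A.mulVec (z (tk k))) l (nhds (A.mulVec zstar)) :=
        (hcont.tendsto zstar).comp h1
      have heq : ∀ᶠ k in l, z (tk k + s) = A.mulVec (z (tk k)) := by
        have hmem : ∀ᶠ k in l, σ k = m :=
          eventually_inf_principal.mpr (Eventually.of_forall fun k hk => hk)
        filter_upwards [hmem] with k hk
        have hlt : tk k + s < tk (k + 1) := by
          have := hgap k; linarith
        have hKk : K (tk k + s) = k := hKeq k (tk k + s) (le_add_of_nonneg_right hs0) hlt
        rw [hz (tk k + s) (le_trans (htk_nonneg k) (le_add_of_nonneg_right hs0)), hKk, hk]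
        rw [show tk k + s - tk k = s from add_sub_cancel_left (tk k) s]
        rw [show -(s • L m) = s • (-L m) by rw [smul_neg], ← hA, ← Matrix.mulVec_mulVec, hzk k]
      have h2' : Tendsto (fun k => A.mulVec (z (tk k))) l (nhds zstar) := h2.congr' heq
      have : A.mulVec zstar = zstar := tendsto_nhds_unique h3 h2'
      simpa [hf, hA] using this
    have hd : HasDerivAt f ((-L m).mulVec zstar) 0 := key_deriv n (-L m) zstar
    have hslope := hasDerivAt_iff_tendsto_slope.mp hd
    have hne2 : (nhdsWithin (0 : ℝ) (Set.Ioo 0 α)).NeBot := by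
      apply mem_closure_iff_nhdsWithin_neBot.mp
      rw [closure_Ioo hα.ne]
      exact ⟨le_rfl, hα.le⟩
    have hle : nhdsWithin (0 : ℝ) (Set.Ioo 0 α) ≤ nhdsWithin (0 : ℝ) {0}ᶜ :=
      nhdsWithin_mono 0 (fun x hx => ne_of_gt hx.1)
    have h1 : Tendsto (slope f 0) (nhdsWithin 0 (Set.Ioo 0 α)) (nhds ((-L m).mulVec zstar)) :=
      hslope.mono_left hle
    have hf0 : f 0 = zstar := by simp [hf, NormedSpace.exp_zero]
    have h2 : Tendsto (slope f 0) (nhdsWithin 0 (Set.Ioo 0 α)) (nhds 0) := by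
      apply Tendsto.congr' _ tendsto_const_nhds
      filter_upwards [self_mem_nhdsWithin] with s hs'
      rw [slope_def_module, hfix s hs'.1.le hs'.2, hf0, sub_self, smul_zero]
    have hzero : (-L m).mulVec zstar = 0 := tendsto_nhds_unique h1 h2
    rw [Matrix.neg_mulVec] at hzero
    exact neg_eq_zero.mp hzero
  refine ⟨key, ?_⟩
  simp only [Set.mem_iInter, Set.mem_setOf_eq]
  intro m hm
  exact key m hm
end

section
/- (Exponential decay of switched products.) Let M_1,…,M_p ∈ ℝ^{n×n} be finitely many real matrices such that each symmetric part S_m = (M_m + M_mᵀ)/2 is positive definite. Let α > 0, let (t_k)_{k≥0} be strictly increasing with t_0 = 0 and t_{k+1} − t_k ≥ α for all k, and let σ : ℕ → {1,…,p}. Set Λ = max_{1≤m≤p} exp(−2α λ_min(S_m)). Then Λ < 1, and for every k ≥ 0, every t ∈ [t_k, t_{k+1}), and every v ∈ ℝ^n, ‖ exp(−(t − t_k) M_{σ(k)}) · exp(−(t_k − t_{k−1}) M_{σ(k−1)}) ⋯ exp(−(t_1 − t_0) M_{σ(0)}) v ‖₂² ≤ Λ^k ‖v‖₂². -/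
open Matrix Filter

section aux

attribute [local instance] Matrix.linftyOpNormedRing Matrix.linftyOpNormedAlgebra

lemma dp_self_nonneg {n : ℕ} (v : Fin n → ℝ) : 0 ≤ v ⬝ᵥ v :=
  Finset.sum_nonneg fun i _ => mul_self_nonneg (v i)

/-- Rayleigh-type lower bound: `λ_min ‖x‖² ≤ xᵀ A x` for a real symmetric matrix. -/
lemma rayleigh_min {n : ℕ} {A : Matrix (Fin n) (Fin n) ℝ} (hA : A.IsHermitian)
    (x : Fin n → ℝ) : (⨅ i, hA.eigenvalues i) * (x ⬝ᵥ x) ≤ x ⬝ᵥ (A *ᵥ x) := by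
  set U : Matrix (Fin n) (Fin n) ℝ := (hA.eigenvectorUnitary : Matrix (Fin n) (Fin n) ℝ) with hUdef
  have hstar : star U = Uᵀ := by
    ext i j; simp [Matrix.star_apply]
  have hUU : U * star U = 1 := Matrix.mem_unitaryGroup_iff.mp hA.eigenvectorUnitary.2
  set y : Fin n → ℝ := star U *ᵥ x with hy
  have key : ∀ z : Fin n → ℝ, x ⬝ᵥ (U *ᵥ z) = y ⬝ᵥ z := by
    intro z
    rw [dotProduct_mulVec, hy, hstar, mulVec_transpose]
  have hUy : U *ᵥ y = x := by rw [hy, mulVec_mulVec, hUU, one_mulVec]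
  have h2 : x ⬝ᵥ x = y ⬝ᵥ y := by
    have h3 := key y
    rwa [hUy] at h3
  have h1 : x ⬝ᵥ (A *ᵥ x) = ∑ i, hA.eigenvalues i * (y i * y i) := by
    conv_lhs => rw [hA.spectral_theorem, Unitary.conjStarAlgAut_apply]
    rw [← hUdef, ← mulVec_mulVec, ← mulVec_mulVec, key]
    simp only [dotProduct, mulVec_diagonal, Function.comp_apply,
      RCLike.ofReal_real_eq_id, id]
    exact Finset.sum_congr rfl fun i _ => by ring
  rw [h1, h2, dotProduct, Finset.mul_sum]
  refine Finset.sum_le_sum fun i _ => ?_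
  have hle : (⨅ j, hA.eigenvalues j) ≤ hA.eigenvalues i :=
    ciInf_le (Set.Finite.bddBelow (Set.finite_range _)) i
  exact mul_le_mul_of_nonneg_right hle (mul_self_nonneg (y i))

/-- xᵀ M x equals xᵀ S x for the symmetric part S. -/
lemma dp_sym {n : ℕ} (M : Matrix (Fin n) (Fin n) ℝ) (x : Fin n → ℝ) :
    x ⬝ᵥ ((((1:ℝ)/2) • (M + Mᵀ)) *ᵥ x) = x ⬝ᵥ (M *ᵥ x) := by
  have hT : x ⬝ᵥ (Mᵀ *ᵥ x) = x ⬝ᵥ (M *ᵥ x) := by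
    rw [mulVec_transpose, dotProduct_mulVec, dotProduct_comm]
  rw [smul_mulVec, dotProduct_smul, add_mulVec, dotProduct_add, hT, smul_eq_mul]
  ring

/-- The basic one-interval decay estimate. -/
lemma exp_decay {n : ℕ} (M : Matrix (Fin n) (Fin n) ℝ)
    (hPD : (((1:ℝ)/2) • (M + Mᵀ)).PosDef) {s : ℝ} (hs : 0 ≤ s) (v : Fin n → ℝ) :
    (NormedSpace.exp (-(s • M)) *ᵥ v) ⬝ᵥ (NormedSpace.exp (-(s • M)) *ᵥ v)
      ≤ Real.exp (-(2 * (⨅ i, hPD.isHermitian.eigenvalues i) * s)) * (v ⬝ᵥ v) := by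
  set lam : ℝ := ⨅ i, hPD.isHermitian.eigenvalues i with hlam
  set x : ℝ → Fin n → ℝ := fun u => NormedSpace.exp (u • (-M)) *ᵥ v with hxdef
  let L : Matrix (Fin n) (Fin n) ℝ →L[ℝ] (Fin n → ℝ) :=
    LinearMap.toContinuousLinearMap
      { toFun := fun A => A *ᵥ v
        map_add' := fun A B => Matrix.add_mulVec A B v
        map_smul' := fun c A => Matrix.smul_mulVec c A v }
  have hx : ∀ u, HasDerivAt x (-(M *ᵥ x u)) u := by
    intro u
    have h1 := hasDerivAt_exp_smul_const' (𝕂 := ℝ) (-M) u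
    have h2 := L.hasFDerivAt.comp_hasDerivAt u h1
    have heq : L (-M * NormedSpace.exp (u • (-M))) = -(M *ᵥ x u) := by
      show (-M * NormedSpace.exp (u • (-M))) *ᵥ v = -(M *ᵥ x u)
      rw [← mulVec_mulVec, neg_mulVec]
    rw [← heq]
    exact h2
  have hxi : ∀ i u, HasDerivAt (fun u => x u i) ((-(M *ᵥ x u)) i) u := fun i u =>
    (ContinuousLinearMap.proj (R := ℝ) (φ := fun _ : Fin n => ℝ) i).hasFDerivAt.comp_hasDerivAt
      u (hx u)
  set g : ℝ → ℝ := fun u => x u ⬝ᵥ x u with hg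
  have hgd : ∀ u, HasDerivAt g (-2 * (x u ⬝ᵥ (M *ᵥ x u))) u := by
    intro u
    have h := HasDerivAt.sum (u := Finset.univ) (fun i _ => (hxi i u).mul (hxi i u))
    have he : ∑ i, ((-(M *ᵥ x u)) i * x u i + x u i * (-(M *ᵥ x u)) i)
        = -2 * (x u ⬝ᵥ (M *ᵥ x u)) := by
      simp only [dotProduct, Finset.mul_sum, Pi.neg_apply]
      exact Finset.sum_congr rfl fun i _ => by ring
    rw [he] at h
    have hfun : g = ∑ i, ((fun u => x u i) * fun u => x u i) := by
      ext w
      simp only [hg, dotProduct, Finset.sum_apply, Pi.mul_apply]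
    rw [hfun]
    exact h
  have hhd : ∀ u, HasDerivAt (fun u => Real.exp (2 * lam * u) * g u)
      (Real.exp (2 * lam * u) * (2 * lam) * g u
        + Real.exp (2 * lam * u) * (-2 * (x u ⬝ᵥ (M *ᵥ x u)))) u := by
    intro u
    have h := (((hasDerivAt_id u).const_mul (2 * lam)).exp.mul (hgd u))
    simpa [Pi.mul_def] using h
  have hanti : Antitone (fun u => Real.exp (2 * lam * u) * g u) := by
    refine antitone_of_deriv_nonpos (fun u => (hhd u).differentiableAt) fun u => ?_
    rw [(hhd u).deriv]
    have hray : lam * (x u ⬝ᵥ x u) ≤ x u ⬝ᵥ (M *ᵥ x u) := by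
      rw [← dp_sym M (x u)]
      exact rayleigh_min hPD.isHermitian (x u)
    have hE : (0:ℝ) < Real.exp (2 * lam * u) := Real.exp_pos _
    nlinarith [hray, hE]
  have h1 : Real.exp (2 * lam * s) * g s ≤ v ⬝ᵥ v := by
    have h2 := hanti hs
    simpa [hg, hxdef] using h2
  have hgoal : g s ≤ Real.exp (-(2 * lam * s)) * (v ⬝ᵥ v) := by
    rw [Real.exp_neg, inv_mul_eq_div, le_div_iff₀ (Real.exp_pos _)]
    nlinarith [h1]
  have hxeq : NormedSpace.exp (-(s • M)) = NormedSpace.exp (s • (-M)) := by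
    rw [smul_neg]
  rw [hxeq]
  exact hgoal

end aux

/-- exponential decay of switched products: if every symmetric part
`S_m = (M_m + M_mᵀ)/2` is positive definite, then with
`Λ = max_m exp(−2α λ_min(S_m))` one has `Λ < 1` and the squared Euclidean norm of
the switched product applied to any `v` decays like `Λ^k ‖v‖₂²`. -/
theorem stmt13 (n p : ℕ) (hn : 1 ≤ n)
    (Ms : Fin p → Matrix (Fin n) (Fin n) ℝ)
    (hPD : ∀ m : Fin p, (((1 : ℝ) / 2) • (Ms m + (Ms m)ᵀ)).PosDef)
    (α : ℝ) (hα : 0 < α)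
    (tk : ℕ → ℝ) (htk0 : tk 0 = 0) (hmono : StrictMono tk)
    (hgap : ∀ k, α ≤ tk (k + 1) - tk k)
    (σ : ℕ → Fin p) :
    (⨆ m : Fin p, Real.exp (-(2 * α * ⨅ i, (hPD m).isHermitian.eigenvalues i))) < 1 ∧
    ∀ k : ℕ, ∀ t ∈ Set.Ico (tk k) (tk (k + 1)), ∀ v : Fin n → ℝ,
      ((NormedSpace.exp (-((t - tk k) • Ms (σ k))) * switchProd Ms σ tk k).mulVec v) ⬝ᵥ
        ((NormedSpace.exp (-((t - tk k) • Ms (σ k))) * switchProd Ms σ tk k).mulVec v) ≤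
      (⨆ m : Fin p, Real.exp (-(2 * α * ⨅ i, (hPD m).isHermitian.eigenvalues i))) ^ k *
        (v ⬝ᵥ v) := by
  rcases Nat.eq_zero_or_pos p with hp | hp
  · subst hp
    refine ⟨by rw [Real.iSup_of_isEmpty]; norm_num, ?_⟩
    intro k t ht v; exact (σ k).elim0
  haveI : Nonempty (Fin p) := Fin.pos_iff_nonempty.mp hp
  haveI : Nonempty (Fin n) := Fin.pos_iff_nonempty.mp hn
  set lam : Fin p → ℝ := fun m => ⨅ i, (hPD m).isHermitian.eigenvalues i with hlamdef
  set Λ : ℝ := ⨆ m : Fin p, Real.exp (-(2 * α * lam m)) with hΛdef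
  have hlampos : ∀ m, 0 < lam m := by
    intro m
    obtain ⟨i0, hi0⟩ := Finite.exists_min ((hPD m).isHermitian.eigenvalues)
    have h1 : (hPD m).isHermitian.eigenvalues i0 ≤ lam m := le_ciInf hi0
    exact lt_of_lt_of_le ((hPD m).eigenvalues_pos i0) h1
  have hΛterm : ∀ m, Real.exp (-(2 * α * lam m)) ≤ Λ := by
    intro m
    rw [hΛdef]
    exact le_ciSup (f := fun m => Real.exp (-(2 * α * lam m)))
      (Set.Finite.bddAbove (Set.finite_range _)) m
  have hΛ0 : 0 ≤ Λ :=
    le_trans (Real.exp_pos _).le (hΛterm (Classical.arbitrary _))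
  have hΛlt : Λ < 1 := by
    obtain ⟨m0, hm0⟩ := Finite.exists_max fun m => Real.exp (-(2 * α * lam m))
    refine lt_of_le_of_lt (ciSup_le hm0) ?_
    rw [Real.exp_lt_one_iff]
    have := hlampos m0
    nlinarith
  refine ⟨hΛlt, ?_⟩
  have key : ∀ k v, ((switchProd Ms σ tk k) *ᵥ v) ⬝ᵥ ((switchProd Ms σ tk k) *ᵥ v)
      ≤ Λ ^ k * (v ⬝ᵥ v) := by
    intro k
    induction k with
    | zero => intro v; simp [switchProd]
    | succ k ih =>
      intro v
      have hΔ : (0:ℝ) ≤ tk (k + 1) - tk k := le_trans hα.le (hgap k)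
      simp only [switchProd]
      rw [← mulVec_mulVec]
      set w := switchProd Ms σ tk k *ᵥ v with hw
      have hdec := exp_decay (Ms (σ k)) (hPD (σ k)) hΔ w
      refine le_trans hdec ?_
      have hexp : Real.exp (-(2 * lam (σ k) * (tk (k + 1) - tk k))) ≤ Λ := by
        refine le_trans ?_ (hΛterm (σ k))
        apply Real.exp_le_exp.mpr
        have h1 := hgap k
        have h2 := hlampos (σ k)
        nlinarith
      have := mul_le_mul hexp (ih v) (dp_self_nonneg w) hΛ0
      calc Real.exp (-(2 * lam (σ k) * (tk (k + 1) - tk k))) * (w ⬝ᵥ w)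
          ≤ Λ * (Λ ^ k * (v ⬝ᵥ v)) := this
        _ = Λ ^ (k + 1) * (v ⬝ᵥ v) := by ring
  intro k t ht v
  rw [← mulVec_mulVec]
  set w := switchProd Ms σ tk k *ᵥ v with hw
  have hts : (0:ℝ) ≤ t - tk k := sub_nonneg.mpr ht.1
  have hdec := exp_decay (Ms (σ k)) (hPD (σ k)) hts w
  refine le_trans hdec (le_trans ?_ (key k v))
  have hexp : Real.exp (-(2 * lam (σ k) * (t - tk k))) ≤ 1 := by
    apply Real.exp_le_one_iff.mpr
    have := hlampos (σ k)
    nlinarith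
  nlinarith [dp_self_nonneg w, mul_le_mul_of_nonneg_right hexp (dp_self_nonneg w)]
end
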